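/- arXiv:2509.12563 — 5 statements merged into one kernel-verified Lean document; each statement's English description precedes it below -/
import Mathlib

section
/- Let T be a tree on n vertices and k ≥ 2 an integer. Then there exists a vertex set X ⊆ V(T) with |X| ≤ ⌊n/k⌋ such that every connected component of T − X has at most k − 1 vertices. -/
set_option linter.unusedSectionVars false


open SimpleGraph

namespace TreeDeletionAux

variable {V : Type*} [Fintype V] [DecidableEq V] {T : SimpleGraph V}

/-- `A` is connected-within-itself in `T`. -/
def Conn (T : SimpleGraph V) (A : Set V) : Prop :=
  ∀ a ∈ A, ∀ b ∈ A, ∃ p : T.Walk a b, ∀ x ∈ p.support, x ∈ A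

/-- The set of vertices reachable from `a` by walks staying in `W`. -/
def compIn (T : SimpleGraph V) (W : Set V) (a : V) : Set V :=
  {x | ∃ p : T.Walk a x, ∀ y ∈ p.support, y ∈ W}

lemma compIn_subset {W : Set V} {a : V} : compIn T W a ⊆ W := by
  rintro x ⟨p, hp⟩
  exact hp x p.end_mem_support

lemma mem_compIn_self {W : Set V} {a : V} (ha : a ∈ W) : a ∈ compIn T W a :=
  ⟨Walk.nil, by simp [ha]⟩

lemma compIn_closed {W : Set V} {a x y : V} (hx : x ∈ compIn T W a)
    (hxy : T.Adj x y) (hy : y ∈ W) : y ∈ compIn T W a := by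
  obtain ⟨p, hp⟩ := hx
  refine ⟨p.concat hxy, ?_⟩
  intro z hz
  rw [Walk.support_concat, List.mem_append] at hz
  rcases hz with h | h
  · exact hp z h
  · simp only [List.mem_singleton] at h
    subst h; exact hy

lemma mem_compIn_of_mem_support {W : Set V} {a x : V} {p : T.Walk a x}
    (hp : ∀ y ∈ p.support, y ∈ W) {z : V} (hz : z ∈ p.support) :
    z ∈ compIn T W a :=
  ⟨p.takeUntil z hz, fun y hy => hp y (p.support_takeUntil_subset hz hy)⟩

lemma subset_compIn {A W : Set V} {a : V} (hA : Conn T A) (haA : a ∈ A)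
    (hAW : A ⊆ W) : A ⊆ compIn T W a := by
  intro x hx
  obtain ⟨p, hp⟩ := hA a haA x hx
  exact ⟨p, fun y hy => hAW (hp y hy)⟩

lemma conn_compIn {W : Set V} {a : V} : Conn T (compIn T W a) := by
  rintro x ⟨p, hp⟩ y ⟨q, hq⟩
  refine ⟨p.reverse.append q, ?_⟩
  intro z hz
  rw [Walk.mem_support_append_iff] at hz
  rcases hz with h | h
  · rw [Walk.support_reverse, List.mem_reverse] at h
    exact mem_compIn_of_mem_support hp h
  · exact mem_compIn_of_mem_support hq h

lemma conn_subset_or {D P Q : Set V} (hD : Conn T D) (hsub : D ⊆ P ∪ Q)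
    (hPQ : ∀ x ∈ P, ∀ y ∈ Q, ¬ T.Adj x y) : D ⊆ P ∨ D ⊆ Q := by
  by_cases hQ : ∃ x, x ∈ D ∧ x ∈ Q
  · obtain ⟨d2, hd2D, hd2Q⟩ := hQ
    right
    intro x hx
    by_contra hxQ
    obtain ⟨p, hp⟩ := hD x hx d2 hd2D
    obtain ⟨d, hdp, hdfst, hdsnd⟩ := p.exists_boundary_dart Qᶜ hxQ (not_not.mpr hd2Q)
    have hfstD : d.fst ∈ D := hp _ (p.dart_fst_mem_support_of_mem_darts hdp)
    have hfstP : d.fst ∈ P := (hsub hfstD).resolve_right hdfst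
    exact hPQ _ hfstP _ (not_not.mp hdsnd) d.adj
  · left
    intro x hx
    exact (hsub hx).resolve_right (fun h => hQ ⟨x, hx, h⟩)

lemma adj_unique (hac : T.IsAcyclic) {D : Set V} (hD : Conn T D) {v d1 d2 : V}
    (hv : v ∉ D) (h1 : d1 ∈ D) (h2 : d2 ∈ D) (a1 : T.Adj v d1) (a2 : T.Adj v d2) :
    d1 = d2 := by
  by_contra hne
  obtain ⟨p, hp⟩ := hD d1 h1 d2 h2
  have hvp : v ∉ (p.toPath : T.Walk d1 d2).support :=
    fun h => hv (hp v (p.support_toPath_subset h))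
  have path1 : (Walk.cons a1 (p.toPath : T.Walk d1 d2)).IsPath :=
    (p.toPath.2).cons hvp
  have heq := isAcyclic_iff_path_unique.mp hac ⟨_, path1⟩ (Path.singleton a2)
  have hlen : (Walk.cons a1 (p.toPath : T.Walk d1 d2)).length =
      (Walk.cons a2 Walk.nil).length := by
    rw [Subtype.ext_iff] at heq
    simp only [Path.singleton] at heq
    rw [heq]
  simp only [Walk.length_cons, Walk.length_nil] at hlen
  exact hne (Walk.eq_of_length_eq_zero (p := (p.toPath : T.Walk d1 d2)) (by omega))

lemma main (hac : T.IsAcyclic) {k : ℕ} (hk : 1 ≤ k) :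
    ∀ (n : ℕ) (S : Set V), S.ncard = n →
      ∃ X ⊆ S, X.ncard ≤ S.ncard / k ∧
        ∀ D ⊆ S \ X, Conn T D → D.ncard ≤ k - 1 := by
  intro n
  induction n using Nat.strong_induction_on with
  | _ n IH =>
  intro S hS
  classical
  by_cases hbig : ∃ A, A ⊆ S ∧ Conn T A ∧ k ≤ A.ncard
  · obtain ⟨A, hAS, hAconn, hAcard⟩ := hbig
    set Pred : V → Set V → Prop := fun v B =>
      v ∈ B ∧ B ⊆ S ∧ Conn T B ∧ k ≤ B.ncard ∧
        ∀ b ∈ B, b ≠ v → ∀ s ∈ S, s ∉ B → ¬ T.Adj b s with hPreddef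
    obtain ⟨a0, ha0⟩ := Set.nonempty_of_ncard_ne_zero
      (show A.ncard ≠ 0 by omega)
    have hP0 : Pred a0 (compIn T S a0) := by
      refine ⟨mem_compIn_self (hAS ha0), compIn_subset, conn_compIn, ?_, ?_⟩
      · exact hAcard.trans (Set.ncard_le_ncard (subset_compIn hAconn ha0 hAS)
          (Set.toFinite _))
      · intro b hb _ s hs hsB hadj
        exact hsB (compIn_closed hb hadj hs)
    set Ns : Set ℕ := {m | ∃ v B, Pred v B ∧ B.ncard = m} with hNsdef
    have hNsne : Ns.Nonempty := ⟨_, a0, _, hP0, rfl⟩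
    obtain ⟨v, B, hPB, hBm⟩ := Nat.sInf_mem hNsne
    have hmin : ∀ v' B', Pred v' B' → sInf Ns ≤ B'.ncard :=
      fun v' B' h => Nat.sInf_le ⟨v', B', h, rfl⟩
    obtain ⟨hvB, hBS, hBconn, hBcard, hBedge⟩ := hPB
    -- key claim: all connected subsets of B \ {v} are small
    have hsmall : ∀ D ⊆ B \ {v}, Conn T D → D.ncard ≤ k - 1 := by
      intro D hD hDconn
      by_contra hlt
      push_neg at hlt
      have hDk : k ≤ D.ncard := by omega
      obtain ⟨d0, hd0⟩ := Set.nonempty_of_ncard_ne_zero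
        (show D.ncard ≠ 0 by omega)
      set Ds := compIn T (B \ {v}) d0 with hDsdef
      have hDsub : D ⊆ Ds := subset_compIn hDconn hd0 hD
      have hDsB : Ds ⊆ B \ {v} := compIn_subset
      have hDsS : Ds ⊆ S := fun x hx => hBS (hDsB hx).1
      have hDsconn : Conn T Ds := conn_compIn
      have hDscard : k ≤ Ds.ncard :=
        hDk.trans (Set.ncard_le_ncard hDsub (Set.toFinite _))
      have hvDs : v ∉ Ds := fun h => (hDsB h).2 rfl
      have hd0Ds : d0 ∈ Ds := mem_compIn_self (hD hd0)
      have hstep : ∀ x ∈ Ds, ∀ y ∈ S, T.Adj x y → y ∈ Ds ∨ y = v := by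
        intro x hx y hy hxy
        by_cases hyv : y = v
        · exact Or.inr hyv
        by_cases hyB : y ∈ B
        · exact Or.inl (compIn_closed hx hxy ⟨hyB, hyv⟩)
        · exact absurd hxy (hBedge x (hDsB hx).1 (hDsB hx).2 y hy hyB)
      by_cases hfull : B \ {v} ⊆ Ds
      · -- Ds = B \ {v}
        have hDseq : Ds = B \ {v} := Set.Subset.antisymm hDsB hfull
        have hcard_lt : Ds.ncard < B.ncard := by
          rw [hDseq]
          exact Set.ncard_diff_singleton_lt_of_mem hvB
        by_cases hadj : ∃ x ∈ Ds, T.Adj v x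
        · obtain ⟨v', hv'Ds, hadjv⟩ := hadj
          have hP' : Pred v' Ds := by
            refine ⟨hv'Ds, hDsS, hDsconn, hDscard, ?_⟩
            intro b hb hbv' s hs hsDs hadjb
            rcases hstep b hb s hs hadjb with h | rfl
            · exact hsDs h
            · exact hbv' (adj_unique hac hDsconn hvDs hb hv'Ds hadjb.symm hadjv)
          have := hmin v' Ds hP'
          omega
        · have hP' : Pred d0 Ds := by
            refine ⟨hd0Ds, hDsS, hDsconn, hDscard, ?_⟩
            intro b hb _ s hs hsDs hadjb
            rcases hstep b hb s hs hadjb with h | rfl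
            · exact hsDs h
            · exact hadj ⟨b, hb, hadjb.symm⟩
          have := hmin d0 Ds hP'
          omega
      · -- Ds is a proper subset of B \ {v}: use insert v Ds
        rw [Set.not_subset] at hfull
        obtain ⟨w, hwBv, hwDs⟩ := hfull
        obtain ⟨p, hpB⟩ := hBconn d0 (hD hd0).1 v hvB
        obtain ⟨d, hdp, hdfst, hdsnd⟩ := p.exists_boundary_dart Ds hd0Ds hvDs
        have hsndB : d.snd ∈ B := hpB _ (p.dart_snd_mem_support_of_mem_darts hdp)
        have hsndv : d.snd = v := by
          by_contra hne
          exact hdsnd (compIn_closed hdfst d.adj ⟨hsndB, hne⟩)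
        have hadjxv : T.Adj d.fst v := hsndv ▸ d.adj
        set B' := insert v Ds with hB'def
        have hkey : ∀ a ∈ Ds, ∃ q : T.Walk a v, ∀ x ∈ q.support, x ∈ B' := by
          intro a ha
          obtain ⟨q, hq⟩ := hDsconn a ha d.fst hdfst
          refine ⟨q.concat hadjxv, ?_⟩
          intro x hx
          rw [Walk.support_concat, List.mem_append] at hx
          rcases hx with h | h
          · exact Set.mem_insert_of_mem _ (hq x h)
          · simp only [List.mem_singleton] at h
            subst h; exact Set.mem_insert _ _
        have hconnB' : Conn T B' := by
          intro a ha b hb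
          rcases Set.mem_insert_iff.mp ha with rfl | ha' <;>
            rcases Set.mem_insert_iff.mp hb with rfl | hb'
          · exact ⟨Walk.nil, by simp [hB'def]⟩
          · obtain ⟨q, hq⟩ := hkey b hb'
            exact ⟨q.reverse, by simpa [Walk.support_reverse] using hq⟩
          · exact hkey a ha'
          · obtain ⟨q, hq⟩ := hDsconn a ha' b hb'
            exact ⟨q, fun x hx => Set.mem_insert_of_mem _ (hq x hx)⟩
        have hP' : Pred v B' := by
          refine ⟨Set.mem_insert _ _, ?_, hconnB', ?_, ?_⟩
          · exact Set.insert_subset (hBS hvB) hDsS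
          · exact hDscard.trans (Set.ncard_le_ncard (Set.subset_insert _ _)
              (Set.toFinite _))
          · intro b hb hbv s hs hsB' hadjb
            have hbDs : b ∈ Ds := (Set.mem_insert_iff.mp hb).resolve_left hbv
            rcases hstep b hbDs s hs hadjb with h | rfl
            · exact hsB' (Set.mem_insert_of_mem _ h)
            · exact hsB' (Set.mem_insert _ _)
        have hB'B : B' ⊂ B := by
          constructor
          · exact Set.insert_subset hvB (fun x hx => (hDsB hx).1)
          · intro hBB'
            rcases Set.mem_insert_iff.mp (hBB' hwBv.1) with h | h
            · exact hwBv.2 h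
            · exact hwDs h
        have hcard_lt : B'.ncard < B.ncard :=
          Set.ncard_lt_ncard hB'B (Set.toFinite _)
        have := hmin v B' hP'
        omega
    -- now recurse on S \ B
    have hS'card : (S \ B).ncard = S.ncard - B.ncard :=
      Set.ncard_diff hBS (Set.toFinite _)
    have hkS : k ≤ S.ncard := hBcard.trans (Set.ncard_le_ncard hBS (Set.toFinite _))
    have hlt : (S \ B).ncard < n := by
      rw [hS'card, ← hS]
      omega
    obtain ⟨X', hX'sub, hX'card, hX'good⟩ := IH _ hlt (S \ B) rfl
    refine ⟨insert v X', Set.insert_subset (hBS hvB) (hX'sub.trans Set.diff_subset),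
      ?_, ?_⟩
    · have h1 : (insert v X').ncard ≤ X'.ncard + 1 := Set.ncard_insert_le _ _
      have h2 : (S \ B).ncard / k ≤ (S.ncard - k) / k := by
        apply Nat.div_le_div_right
        omega
      have h3 : (S.ncard - k + k) / k = (S.ncard - k) / k + 1 :=
        Nat.add_div_right _ (by omega)
      rw [Nat.sub_add_cancel hkS] at h3
      omega
    · intro D hD hDconn
      have hsub : D ⊆ (B \ {v}) ∪ ((S \ B) \ X') := by
        intro x hx
        have hxS : x ∈ S := (hD hx).1
        have hxX : x ∉ insert v X' := (hD hx).2
        by_cases hxB : x ∈ B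
        · exact Or.inl ⟨hxB, fun h => hxX (h ▸ Set.mem_insert _ _)⟩
        · exact Or.inr ⟨⟨hxS, hxB⟩, fun h => hxX (Set.mem_insert_of_mem _ h)⟩
      have hnoedge : ∀ x ∈ B \ {v}, ∀ y ∈ (S \ B) \ X', ¬ T.Adj x y :=
        fun x hx y hy => hBedge x hx.1 hx.2 y hy.1.1 hy.1.2
      rcases conn_subset_or hDconn hsub hnoedge with h | h
      · exact hsmall D h hDconn
      · exact hX'good D (fun x hx => ⟨(h hx).1, (h hx).2⟩) hDconn
  · refine ⟨∅, Set.empty_subset S, by simp, ?_⟩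
    intro D hD hconn
    by_contra hlt
    push_neg at hlt
    exact hbig ⟨D, by simpa using hD, hconn, by omega⟩

end TreeDeletionAux

/-- In a tree on `n` vertices, there is a set `X` of at most `⌊n/k⌋` vertices whose
deletion leaves only components with at most `k - 1` vertices. -/
theorem exists_small_deletion_set {V : Type*} [Fintype V] (T : SimpleGraph V)
    (hT : T.IsTree) (k : ℕ) (hk : 2 ≤ k) :
    ∃ X : Set V, X.ncard ≤ Nat.card V / k ∧
      ∀ c : (T.induce Xᶜ).ConnectedComponent, Nat.card c.supp ≤ k - 1 := by
  classical
  obtain ⟨X, hXsub, hXcard, hXgood⟩ :=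
    TreeDeletionAux.main hT.IsAcyclic (show 1 ≤ k by omega) Set.univ.ncard Set.univ rfl
  refine ⟨X, by simpa [Set.ncard_univ] using hXcard, ?_⟩
  intro c
  have hcard : Nat.card c.supp = (Subtype.val '' c.supp).ncard := by
    rw [Set.ncard_image_of_injective _ Subtype.val_injective, Nat.card_coe_set_eq]
  rw [hcard]
  apply hXgood
  · rintro x ⟨y, _, rfl⟩
    exact ⟨Set.mem_univ _, y.2⟩
  · rintro a ⟨a', ha', rfl⟩ b ⟨b', hb', rfl⟩
    rw [ConnectedComponent.mem_supp_iff] at ha' hb'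
    have hreach : (T.induce Xᶜ).Reachable a' b' :=
      ConnectedComponent.exact (ha'.trans hb'.symm)
    obtain ⟨p⟩ := hreach
    refine ⟨p.map (Embedding.induce Xᶜ).toHom, ?_⟩
    intro x hx
    replace hx : x ∈ p.support.map (Embedding.induce (G := T) Xᶜ).toHom := by
      rw [← Walk.support_map]; exact hx
    rw [List.mem_map] at hx
    obtain ⟨z, hz, rfl⟩ := hx
    have hzc : z ∈ c.supp := by
      rw [ConnectedComponent.mem_supp_iff, ← ha']
      exact (ConnectedComponent.sound ⟨p.takeUntil z hz⟩).symm
    exact ⟨z, hzc, rfl⟩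
end

section
/- Let T be a tree on n vertices and k ≥ 2 an integer. Then α_k(T) ≥ ((k−1)/k)·n, where α_k(T) is the maximum size of a vertex set S such that the induced subgraph T[S] contains no tree on k vertices. -/
open SimpleGraph
set_option linter.unusedSectionVars false
set_option linter.unusedVariables false

/-- A set `S` is a generalized `k`-independent set in `G` if the induced subgraph `G[S]`
contains no tree on `k` vertices, equivalently every connected component of `G[S]`
has at most `k - 1` vertices. -/
def IsGenKIndep {V : Type*} (G : SimpleGraph V) (k : ℕ) (S : Set V) : Prop :=
  ∀ c : (G.induce S).ConnectedComponent, Nat.card c.supp ≤ k - 1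

/-- The generalized `k`-independence number: the maximum size of a generalized
`k`-independent set. -/
noncomputable def alphaK {V : Type*} (G : SimpleGraph V) (k : ℕ) : ℕ :=
  sSup {m | ∃ S : Set V, IsGenKIndep G k S ∧ S.ncard = m}

namespace AlphaKAux

variable {V : Type*} [DecidableEq V] {T : SimpleGraph V}

noncomputable def pathTo (hT : T.IsTree) (r u : V) : T.Walk u r :=
  (hT.existsUnique_path u r).exists.choose

lemma pathTo_isPath (hT : T.IsTree) (r u : V) : (pathTo hT r u).IsPath :=
  (hT.existsUnique_path u r).exists.choose_spec

lemma pathTo_eq (hT : T.IsTree) (r : V) {u : V} {p : T.Walk u r} (hp : p.IsPath) :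
    pathTo hT r u = p :=
  ((hT.existsUnique_path u r).unique hp (pathTo_isPath hT r u)).symm

lemma pathTo_dropUntil (hT : T.IsTree) (r : V) {u x : V}
    (hx : x ∈ (pathTo hT r u).support) :
    pathTo hT r x = (pathTo hT r u).dropUntil x hx :=
  pathTo_eq hT r ((pathTo_isPath hT r u).dropUntil hx)

lemma support_pathTo_subset (hT : T.IsTree) (r : V) {u x : V}
    (hx : x ∈ (pathTo hT r u).support) :
    (pathTo hT r x).support ⊆ (pathTo hT r u).support := by
  rw [pathTo_dropUntil hT r hx]
  exact Walk.support_dropUntil_subset _ hx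

lemma not_mem_support_pathTo (hT : T.IsTree) (r : V) {u u' : V} (hne : u' ≠ u)
    (hu : u ∈ (pathTo hT r u').support) : u' ∉ (pathTo hT r u).support := by
  intro hu'
  have hnodup := (pathTo_isPath hT r u').support_nodup
  have hspec := Walk.take_spec (pathTo hT r u') hu
  rw [← hspec, Walk.support_append] at hnodup
  have hdisj := (List.nodup_append.mp hnodup).2.2
  have h1 : u' ∈ ((pathTo hT r u').takeUntil u hu).support := Walk.start_mem_support _
  have h2 : u' ∈ ((pathTo hT r u').dropUntil u hu).support := by
    rw [← pathTo_dropUntil hT r hu]; exact hu'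
  have h3 : u' ∈ ((pathTo hT r u').dropUntil u hu).support.tail := by
    have := Walk.support_eq_cons ((pathTo hT r u').dropUntil u hu)
    rw [this] at h2
    rcases List.mem_cons.mp h2 with h | h
    · exact absurd h hne
    · exact h
  exact hdisj u' h1 u' h3 rfl

lemma adj_dichotomy (hT : T.IsTree) (r : V) {u u' : V} (h : T.Adj u u') :
    pathTo hT r u = Walk.cons h (pathTo hT r u') ∨
    pathTo hT r u' = Walk.cons h.symm (pathTo hT r u) := by
  by_cases hu : u ∈ (pathTo hT r u').support
  · right
    exact pathTo_eq hT r ((pathTo_isPath hT r u).cons (not_mem_support_pathTo hT r h.ne' hu))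
  · left
    exact pathTo_eq hT r ((pathTo_isPath hT r u').cons hu)

end AlphaKAux

namespace AlphaKAux2
open AlphaKAux

variable {V : Type*} [DecidableEq V] {T : SimpleGraph V}

lemma exists_branch (hT : T.IsTree) :
    ∀ {u r : V} (p : T.Walk u r), p.IsPath → ∀ v ∈ p.support, v ≠ u →
      ∃ (w : V) (h : T.Adj w v), w ∈ p.support ∧
        pathTo hT r w = Walk.cons h (pathTo hT r v) := by
  intro u r p
  induction p with
  | nil =>
    intro _ v hv hne
    rw [Walk.support_nil] at hv
    simp only [List.mem_singleton] at hv
    exact absurd hv hne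
  | @cons a b c h q ih =>
    intro hp v hv hne
    rw [Walk.support_cons] at hv
    rcases List.mem_cons.mp hv with rfl | hv'
    · exact absurd rfl hne
    · by_cases hvb : v = b
      · subst hvb
        refine ⟨a, h, Walk.start_mem_support _, ?_⟩
        have hq : pathTo hT c v = q := pathTo_eq hT c hp.of_cons
        rw [hq]
        exact pathTo_eq hT c hp
      · obtain ⟨w, hw, hwmem, hwcons⟩ := ih hp.of_cons v hv' hvb
        exact ⟨w, hw, by rw [Walk.support_cons]; exact List.mem_cons_of_mem _ hwmem, hwcons⟩

lemma branch_step (hT : T.IsTree) (r : V) {v w u u' : V} (hadj : T.Adj u u')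
    (hwv : T.Adj w v) (hcons : pathTo hT r w = Walk.cons hwv (pathTo hT r v))
    (hu : w ∈ (pathTo hT r u).support) (hu' : u' ≠ v) :
    w ∈ (pathTo hT r u').support := by
  rcases adj_dichotomy hT r hadj with hd | hd
  · rw [hd, Walk.support_cons] at hu
    rcases List.mem_cons.mp hu with rfl | hmem
    · -- w = u, so pathTo w = cons hadj (pathTo u') and = cons hwv (pathTo v)
      exfalso
      have h1 : (Walk.cons hwv (pathTo hT r v)).support
          = (Walk.cons hadj (pathTo hT r u')).support := by
        rw [← hcons, ← hd]
      rw [Walk.support_cons, Walk.support_cons,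
        Walk.support_eq_cons (pathTo hT r v), Walk.support_eq_cons (pathTo hT r u')] at h1
      have := (List.cons.injEq _ _ _ _).mp h1
      have := (List.cons.injEq _ _ _ _).mp this.2
      exact hu' this.1.symm
    · exact hmem
  · rw [hd, Walk.support_cons]
    exact List.mem_cons_of_mem _ hu
end AlphaKAux2
namespace AlphaKAux3
open AlphaKAux AlphaKAux2

variable {V : Type*} [DecidableEq V] {T : SimpleGraph V}

def reachSet (T : SimpleGraph V) (r : V) (W : Set V) : Set V :=
  {u | ∃ p : T.Walk u r, ∀ x ∈ p.support, x ∈ W}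

lemma r_mem_reachSet {r : V} {W : Set V} (hr : r ∈ W) : r ∈ reachSet T r W :=
  ⟨Walk.nil, by simp [hr]⟩

lemma reachSet_subset {r : V} {W : Set V} : reachSet T r W ⊆ W := by
  rintro u ⟨p, hp⟩
  exact hp u p.start_mem_support

lemma reachSet_adj {r : V} {W : Set V} {u y : V} (hu : u ∈ reachSet T r W)
    (hy : y ∈ W) (hadj : T.Adj y u) : y ∈ reachSet T r W := by
  obtain ⟨p, hp⟩ := hu
  refine ⟨Walk.cons hadj p, fun x hx => ?_⟩
  rw [Walk.support_cons] at hx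
  rcases List.mem_cons.mp hx with rfl | hx'
  · exact hy
  · exact hp x hx'

lemma support_pathTo_subset_reachSet (hT : T.IsTree) {r : V} {W : Set V} {u : V}
    (hu : u ∈ reachSet T r W) :
    ∀ x ∈ (pathTo hT r u).support, x ∈ reachSet T r W := by
  obtain ⟨p, hp⟩ := hu
  have hbp : pathTo hT r u = p.bypass := pathTo_eq hT r p.bypass_isPath
  have hsub : ∀ x ∈ (pathTo hT r u).support, x ∈ W := by
    rw [hbp]
    exact fun x hx => hp x (p.support_bypass_subset hx)
  intro x hx
  exact ⟨pathTo hT r x, fun y hy => hsub y (support_pathTo_subset hT r hx hy)⟩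

def branchSet (hT : T.IsTree) (r : V) (W : Set V) (v : V) : Set V :=
  {u | u ∈ reachSet T r W ∧ v ∈ (pathTo hT r u).support}

lemma branchSet_root (hT : T.IsTree) (r : V) (W : Set V) :
    branchSet hT r W r = reachSet T r W := by
  ext u
  exact ⟨fun h => h.1, fun h => ⟨h, Walk.end_mem_support _⟩⟩

-- walk support propagation in induced graphs
lemma walk_support_mem {G : SimpleGraph V} {A S : Set V}
    (hclosed : ∀ ⦃x y : V⦄, x ∈ A → y ∈ S → G.Adj x y → y ∈ A) :
    ∀ {a b : ↥S} (p : (G.induce S).Walk a b), (a : V) ∈ A → ∀ x ∈ p.support, (x : V) ∈ A := by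
  intro a b p
  induction p with
  | nil =>
    intro ha x hx
    rw [Walk.support_nil, List.mem_singleton] at hx
    subst hx; exact ha
  | @cons a b c h q ih =>
    intro ha x hx
    have hadj : G.Adj (a : V) (b : V) := h
    have hb : (b : V) ∈ A := hclosed ha b.2 hadj
    rw [Walk.support_cons] at hx
    rcases List.mem_cons.mp hx with rfl | hx'
    · exact ha
    · exact ih hb x hx'

lemma reachable_induce_of_subset {G : SimpleGraph V} {A S : Set V} :
    ∀ {a b : ↥S} (p : (G.induce S).Walk a b) (hsupp : ∀ x ∈ p.support, (x : V) ∈ A),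
      (G.induce A).Reachable ⟨a, hsupp a p.start_mem_support⟩ ⟨b, hsupp b p.end_mem_support⟩ := by
  intro a b p
  induction p with
  | nil => intro _; exact Reachable.refl _
  | @cons a b c h q ih =>
    intro hsupp
    have ha : (a : V) ∈ A := hsupp a (Walk.start_mem_support _)
    have hb : (b : V) ∈ A := hsupp b (by
      rw [Walk.support_cons]; exact List.mem_cons_of_mem _ q.start_mem_support)
    have hq : ∀ x ∈ q.support, (x : V) ∈ A := fun x hx => hsupp x (by
      rw [Walk.support_cons]; exact List.mem_cons_of_mem _ hx)
    have hadj : (G.induce A).Adj ⟨(a : V), ha⟩ ⟨(b : V), hb⟩ := h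
    exact hadj.reachable.trans (ih hq)

lemma card_supp_le [Finite V] {G : SimpleGraph V} {S A : Set V}
    (c : (G.induce S).ConnectedComponent)
    (h : ∀ y : ↥S, y ∈ c.supp → (y : V) ∈ A) : Nat.card c.supp ≤ A.ncard := by
  rw [← Nat.card_coe_set_eq]
  refine Nat.card_le_card_of_injective
    (fun y => (⟨y.1.1, h y.1 y.2⟩ : A)) ?_
  intro y z hyz
  apply Subtype.ext
  apply Subtype.ext
  simpa using congrArg Subtype.val hyz

lemma isGenKIndep_small [Finite V] {G : SimpleGraph V} {k : ℕ} {A : Set V}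
    (h : A.ncard ≤ k - 1) : IsGenKIndep G k A :=
  fun c => (card_supp_le c (fun y _ => y.2)).trans h

lemma isGenKIndep_empty {G : SimpleGraph V} {k : ℕ} : IsGenKIndep G k (∅ : Set V) :=
  fun c => absurd c.exists_rep.choose.2 (Set.notMem_empty _)

lemma glue_aux [Finite V] {G : SimpleGraph V} {k : ℕ} {A S : Set V} (hAS : A ⊆ S)
    (hclosed : ∀ ⦃x y : V⦄, x ∈ A → y ∈ S → G.Adj x y → y ∈ A)
    (hA : IsGenKIndep G k A) (c : (G.induce S).ConnectedComponent)
    (x₀ : ↥S) (hx₀ : (G.induce S).connectedComponentMk x₀ = c) (hx₀A : (x₀ : V) ∈ A) :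
    Nat.card c.supp ≤ k - 1 := by
  classical
  set c' : (G.induce A).ConnectedComponent :=
    (G.induce A).connectedComponentMk ⟨(x₀ : V), hx₀A⟩ with hc'
  have key : ∀ y : ↥S, (G.induce S).connectedComponentMk y = c →
      ∃ hy : (y : V) ∈ A, (G.induce A).connectedComponentMk (⟨(y : V), hy⟩ : ↥A) = c' := by
    intro y hy
    have hreach : (G.induce S).Reachable x₀ y :=
      ConnectedComponent.exact (hx₀.trans hy.symm)
    obtain ⟨p⟩ := hreach
    have hsupp := walk_support_mem hclosed p hx₀A
    have hyA : (y : V) ∈ A := hsupp y p.end_mem_support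
    refine ⟨hyA, ?_⟩
    have hr2 := reachable_induce_of_subset p hsupp
    exact ConnectedComponent.sound hr2.symm
  refine le_trans ?_ (hA c')
  refine Nat.card_le_card_of_injective
    (fun y => (⟨⟨(y.1 : V), (key y.1 y.2).choose⟩,
      (ConnectedComponent.mem_supp_iff _ _).mpr (key y.1 y.2).choose_spec⟩ : ↥c'.supp)) ?_
  intro y z hyz
  apply Subtype.ext
  apply Subtype.ext
  exact congrArg (fun (a : ↥c'.supp) => (a.1 : V)) hyz

lemma isGenKIndep_union [Finite V] {G : SimpleGraph V} {k : ℕ} {A B : Set V}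
    (hA : IsGenKIndep G k A) (hB : IsGenKIndep G k B)
    (hsep : ∀ x ∈ A, ∀ y ∈ B, ¬ G.Adj x y) : IsGenKIndep G k (A ∪ B) := by
  intro c
  obtain ⟨x₀, hx₀⟩ := c.exists_rep
  have hx₀' : (G.induce (A ∪ B)).connectedComponentMk x₀ = c := hx₀
  rcases x₀.2 with hxA | hxB
  · refine glue_aux Set.subset_union_left ?_ hA c x₀ hx₀' hxA
    intro x y hx hy hadj
    rcases hy with hy | hy
    · exact hy
    · exact absurd hadj (hsep x hx y hy)
  · refine glue_aux Set.subset_union_right ?_ hB c x₀ hx₀' hxB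
    intro x y hx hy hadj
    rcases hy with hy | hy
    · exact absurd hadj.symm (hsep y hy x hx)
    · exact hy

end AlphaKAux3
namespace AlphaKAuxMain
open AlphaKAux AlphaKAux2 AlphaKAux3

variable {V : Type*} [DecidableEq V] [Fintype V] {T : SimpleGraph V}

lemma tree_bound (hT : T.IsTree) {k : ℕ} (hk : 2 ≤ k) :
    ∀ (n : ℕ) (W : Set V), W.ncard ≤ n →
      ∃ S : Set V, S ⊆ W ∧ IsGenKIndep T k S ∧
        ((k : ℚ) - 1) / k * W.ncard ≤ S.ncard := by
  have hk0 : (0 : ℚ) < k := by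
    have : (0 : ℕ) < k := by omega
    exact_mod_cast this
  intro n
  induction n with
  | zero =>
    intro W hW
    have hW0 : W.ncard = 0 := by omega
    refine ⟨∅, Set.empty_subset _, isGenKIndep_empty, ?_⟩
    simp [hW0]
  | succ n ih =>
    intro W hW
    rcases W.eq_empty_or_nonempty with rfl | ⟨r, hr⟩
    · exact ⟨∅, subset_rfl, isGenKIndep_empty, by simp⟩
    set C := reachSet T r W with hCdef
    have hCW : C ⊆ W := reachSet_subset
    have hrC : r ∈ C := r_mem_reachSet hr
    have hCpos : 0 < C.ncard := (Set.ncard_pos C.toFinite).mpr ⟨r, hrC⟩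
    have hCclosed : ∀ ⦃x y : V⦄, x ∈ C → y ∈ W → T.Adj x y → y ∈ C :=
      fun x y hx hy hadj => reachSet_adj hx hy hadj.symm
    by_cases hCk : C.ncard ≤ k - 1
    · obtain ⟨S', hS'W, hS'ind, hS'card⟩ := ih (W \ C) (by
        have := Set.ncard_diff hCW C.toFinite
        omega)
      refine ⟨S' ∪ C, Set.union_subset (hS'W.trans Set.diff_subset) hCW, ?_, ?_⟩
      · refine isGenKIndep_union hS'ind (isGenKIndep_small hCk) ?_
        intro x hx y hy hadj
        exact (hS'W hx).2 (hCclosed hy (hS'W hx).1 hadj.symm)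
      · have hdisj : Disjoint S' C := Set.disjoint_left.mpr fun a ha hc => (hS'W ha).2 hc
        rw [Set.ncard_union_eq hdisj S'.toFinite C.toFinite]
        have hle := Set.ncard_le_ncard hCW W.toFinite
        have hd : (((W \ C).ncard : ℚ)) = (W.ncard : ℚ) - C.ncard := by
          rw [Set.ncard_diff hCW C.toFinite, Nat.cast_sub hle]
        rw [hd] at hS'card
        have hq1 : ((k : ℚ) - 1) / k ≤ 1 := by
          rw [div_le_one hk0]; linarith
        have hq0 : 0 ≤ ((k : ℚ) - 1) / k := by
          apply div_nonneg _ hk0.le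
          have : (2 : ℚ) ≤ k := by exact_mod_cast hk
          linarith
        have hc0 : (0 : ℚ) ≤ (C.ncard : ℚ) := Nat.cast_nonneg _
        push_cast
        nlinarith [hS'card]
    · push_neg at hCk
      have hkC : k ≤ C.ncard := by omega
      set M := {m : ℕ | ∃ x ∈ C, k ≤ m ∧ (branchSet hT r W x).ncard = m} with hMdef
      have hrM : C.ncard ∈ M := ⟨r, hrC, hkC, by rw [branchSet_root]⟩
      obtain ⟨v, hvC, hkv, hveq⟩ := Nat.sInf_mem (⟨C.ncard, hrM⟩ : M.Nonempty)
      set B := branchSet hT r W v with hBdef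
      have hBC : B ⊆ C := fun x hx => hx.1
      have hvB : v ∈ B := ⟨hvC, Walk.start_mem_support _⟩
      have hBW : B ⊆ W := hBC.trans hCW
      have hBpos : 0 < B.ncard := (Set.ncard_pos B.toFinite).mpr ⟨v, hvB⟩
      have hkB : k ≤ B.ncard := by rw [hveq]; exact hkv
      obtain ⟨S', hS'W, hS'ind, hS'card⟩ := ih (W \ B) (by
        have := Set.ncard_diff hBW B.toFinite
        omega)
      have hBind : IsGenKIndep T k (B \ {v}) := by
        intro c
        obtain ⟨u₀, hu₀⟩ := c.exists_rep
        have hu₀' : (T.induce (B \ {v})).connectedComponentMk u₀ = c := hu₀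
        obtain ⟨huB, huv⟩ := u₀.2
        have huv' : (u₀ : V) ≠ v := by simpa using huv
        obtain ⟨w, hwv, hwmem, hwcons⟩ :=
          exists_branch hT (pathTo hT r (u₀ : V)) (pathTo_isPath hT r _) v huB.2
            (Ne.symm huv')
        have hwC : w ∈ C := support_pathTo_subset_reachSet hT huB.1 w hwmem
        have hvmem : v ∈ (pathTo hT r w).support := by
          rw [hwcons, Walk.support_cons]
          exact List.mem_cons_of_mem _ (Walk.start_mem_support _)
        have hwnotv : w ∉ (pathTo hT r v).support := by
          have hp := pathTo_isPath hT r w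
          rw [hwcons] at hp
          exact ((Walk.cons_isPath_iff _ _).mp hp).2
        have hBw_sub : branchSet hT r W w ⊆ B \ {v} := by
          rintro x ⟨hxreach, hwx⟩
          refine ⟨⟨hxreach, support_pathTo_subset hT r hwx hvmem⟩, ?_⟩
          intro hxv
          rw [Set.mem_singleton_iff] at hxv
          subst hxv
          exact hwnotv hwx
        have hBw_card : (branchSet hT r W w).ncard ≤ k - 1 := by
          by_contra hcon
          push_neg at hcon
          have h1 : sInf M ≤ (branchSet hT r W w).ncard :=
            Nat.sInf_le ⟨w, hwC, by omega, rfl⟩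
          have h2 : (branchSet hT r W w).ncard ≤ (B \ {v}).ncard :=
            Set.ncard_le_ncard hBw_sub (Set.toFinite _)
          have h3 : (B \ {v}).ncard = B.ncard - 1 :=
            Set.ncard_diff_singleton_of_mem hvB
          omega
        refine (card_supp_le c ?_).trans hBw_card
        intro y hy
        have hreach : (T.induce (B \ {v})).Reachable u₀ y :=
          ConnectedComponent.exact
            (hu₀'.trans ((ConnectedComponent.mem_supp_iff _ _).mp hy).symm)
        obtain ⟨p⟩ := hreach
        have hclosed : ∀ ⦃x z : V⦄, x ∈ branchSet hT r W w → z ∈ B \ {v} →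
            T.Adj x z → z ∈ branchSet hT r W w := by
          intro x z hx hz hadj
          have hzv : z ≠ v := by simpa using hz.2
          exact ⟨hz.1.1, branch_step hT r hadj hwv hwcons hx.2 hzv⟩
        have hstart : (u₀ : V) ∈ branchSet hT r W w := ⟨huB.1, hwmem⟩
        exact walk_support_mem hclosed p hstart y p.end_mem_support
      refine ⟨S' ∪ (B \ {v}),
        Set.union_subset (hS'W.trans Set.diff_subset)
          ((Set.diff_subset.trans hBW)), ?_, ?_⟩
      · refine isGenKIndep_union hS'ind hBind ?_
        intro x hx y hy hadj
        have hxW : x ∈ W \ B := hS'W hx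
        have hyC : y ∈ C := hBC hy.1
        have hxC : x ∈ C := hCclosed hyC hxW.1 hadj.symm
        apply hxW.2
        refine ⟨hxC, ?_⟩
        have hyv : y ≠ v := by simpa using hy.2
        rcases adj_dichotomy hT r hadj with hd | hd
        · rw [hd, Walk.support_cons]
          exact List.mem_cons_of_mem _ hy.1.2
        · have hv := hy.1.2
          rw [hd, Walk.support_cons] at hv
          rcases List.mem_cons.mp hv with h | h
          · exact absurd h.symm hyv
          · exact h
      · have hdisj : Disjoint S' (B \ {v}) :=
          Set.disjoint_left.mpr fun a ha hc => (hS'W ha).2 hc.1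
        rw [Set.ncard_union_eq hdisj S'.toFinite (Set.toFinite _)]
        have hle := Set.ncard_le_ncard hBW W.toFinite
        have hd : (((W \ B).ncard : ℚ)) = (W.ncard : ℚ) - B.ncard := by
          rw [Set.ncard_diff hBW B.toFinite, Nat.cast_sub hle]
        rw [hd] at hS'card
        have h3 : (B \ {v}).ncard = B.ncard - 1 :=
          Set.ncard_diff_singleton_of_mem hvB
        have hcast : (((B \ {v}).ncard : ℕ) : ℚ) = (B.ncard : ℚ) - 1 := by
          rw [h3, Nat.cast_sub (by omega)]
          norm_num
        have hkb : (k : ℚ) ≤ (B.ncard : ℚ) := by exact_mod_cast hkB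
        have key : ((k : ℚ) - 1) / k * B.ncard ≤ (B.ncard : ℚ) - 1 := by
          rw [div_mul_eq_mul_div, div_le_iff₀ hk0]
          nlinarith
        have expand : ((k : ℚ) - 1) / k * (W.ncard : ℚ)
            = ((k : ℚ) - 1) / k * ((W.ncard : ℚ) - B.ncard)
              + ((k : ℚ) - 1) / k * B.ncard := by ring
        push_cast [hcast]
        rw [expand]
        linarith
end AlphaKAuxMain


/-- For every tree `T` on `n` vertices and every integer `k ≥ 2`,
`α_k(T) ≥ ((k-1)/k)·n`. -/
theorem alphaK_tree_lower_bound {V : Type*} [Fintype V] (T : SimpleGraph V)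
    (hT : T.IsTree) (k : ℕ) (hk : 2 ≤ k) :
    ((k : ℚ) - 1) / k * (Nat.card V) ≤ alphaK T k := by
  classical
  obtain ⟨S, hSW, hSind, hScard⟩ :=
    AlphaKAuxMain.tree_bound hT hk (Set.univ : Set V).ncard Set.univ le_rfl
  have hbdd : BddAbove {m | ∃ S : Set V, IsGenKIndep T k S ∧ S.ncard = m} := by
    refine ⟨Fintype.card V, ?_⟩
    rintro m ⟨S', -, rfl⟩
    have := Set.ncard_le_ncard (Set.subset_univ S') Set.finite_univ
    rwa [Set.ncard_univ, Nat.card_eq_fintype_card] at this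
  have h1 : S.ncard ≤ alphaK T k := le_csSup hbdd ⟨S, hSind, rfl⟩
  have h2 : ((Set.univ : Set V).ncard : ℚ) = (Nat.card V : ℚ) := by
    rw [Set.ncard_univ]
  calc ((k : ℚ) - 1) / k * (Nat.card V)
      = ((k : ℚ) - 1) / k * ((Set.univ : Set V).ncard : ℚ) := by rw [h2]
    _ ≤ (S.ncard : ℚ) := hScard
    _ ≤ (alphaK T k : ℚ) := by exact_mod_cast h1
end

section
/- For k ≥ 2, let R^k_i be the family of trees defined recursively: R^k_1 is the set of all trees on k vertices, and T ∈ R^k_i (i ≥ 2) iff T is obtained from some T' ∈ R^k_{i−1} and a tree T'' on k vertices by adding a single edge joining a vertex of T' to a vertex of T''. If T ∈ R^k_{n/k} (so k divides n = |V(T)|), then α_k(T) = ((k−1)/k)·n. -/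
open SimpleGraph

/-- `InRk G k i S` says that the induced subgraph of `G` on `S` belongs to the
family `R_i^k`: it is obtained by attaching `i` `k`-vertex trees one by one,
each joined to the previous part by a single edge. -/
inductive InRk {V : Type*} (G : SimpleGraph V) (k : ℕ) : ℕ → Set V → Prop
  | base (S : Set V) (hcard : S.ncard = k) (htree : (G.induce S).IsTree) : InRk G k 1 S
  | step (i : ℕ) (S B : Set V) (hS : InRk G k i S) (hdisj : Disjoint S B)
      (hcard : B.ncard = k) (htree : (G.induce B).IsTree)
      (hone : ∃! p : V × V, p.1 ∈ S ∧ p.2 ∈ B ∧ G.Adj p.1 p.2) :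
      InRk G k (i + 1) (S ∪ B)

section Helpers
variable {V : Type*} [Fintype V] {G : SimpleGraph V} {k : ℕ}

/-- hom between induced subgraphs -/
def homOfSubset {A B : Set V} (h : A ⊆ B) : G.induce A →g G.induce B :=
  ⟨fun x => ⟨x.1, h x.2⟩, fun hadj => hadj⟩

omit [Fintype V] in
lemma reach_closed {U A : Set V} (hcl : ∀ a ∈ A, ∀ b : ↥U, G.Adj a b.1 → b.1 ∈ A)
    {x y : ↥U} (hr : (G.induce U).Reachable x y) (hx : x.1 ∈ A) :
    ∃ hy : y.1 ∈ A, (G.induce A).Reachable ⟨x.1, hx⟩ ⟨y.1, hy⟩ := by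
  obtain ⟨p⟩ := hr
  revert hx
  induction p with
  | nil => intro hx; exact ⟨hx, Reachable.refl _⟩
  | @cons u v w h q ih =>
    intro hx
    have hv : v.1 ∈ A := hcl u.1 hx v h
    obtain ⟨hy, hr'⟩ := ih hv
    exact ⟨hy, Reachable.trans (Adj.reachable
      (show (G.induce A).Adj ⟨u.1, hx⟩ ⟨v.1, hv⟩ from h)) hr'⟩

lemma isGenKIndep_mono {A B : Set V} (h : A ⊆ B) (hB : IsGenKIndep G k B) :
    IsGenKIndep G k A := by
  intro c
  obtain ⟨x, hx⟩ := c.exists_rep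
  set c' := (G.induce B).connectedComponentMk (homOfSubset (G:=G) h x) with hc'
  have hmem : ∀ y : c.supp, (homOfSubset (G:=G) h y.1 : ↥B) ∈ c'.supp := by
    intro ⟨y, hy⟩
    have : (G.induce A).Reachable y x := by
      rw [ConnectedComponent.mem_supp_iff, ← hx] at hy
      exact ConnectedComponent.eq.mp hy
    exact (ConnectedComponent.mem_supp_iff _ _).mpr
      (ConnectedComponent.sound (this.map (homOfSubset (G:=G) h)))
  have hinj : Function.Injective (fun y : c.supp => (⟨_, hmem y⟩ : c'.supp)) := by
    intro y z heq
    have : y.1.1 = z.1.1 := congrArg (fun w : c'.supp => w.1.1) heq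
    exact Subtype.ext (Subtype.ext this)
  calc Nat.card c.supp ≤ Nat.card c'.supp := Nat.card_le_card_of_injective _ hinj
    _ ≤ k - 1 := hB c'

lemma isGenKIndep_of_ncard_le {A : Set V} (h : A.ncard ≤ k - 1) :
    IsGenKIndep G k A := by
  intro c
  calc Nat.card c.supp ≤ Nat.card ↥A :=
        Nat.card_le_card_of_injective Subtype.val Subtype.val_injective
    _ = A.ncard := Nat.card_coe_set_eq A
    _ ≤ k - 1 := h

lemma not_genKIndep_of_connected_subset (hk : 2 ≤ k) {A B : Set V}
    (hBA : B ⊆ A) (hBcard : B.ncard = k) (hconn : (G.induce B).Connected) :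
    ¬ IsGenKIndep G k A := by
  intro hind
  obtain ⟨x, hxB⟩ : B.Nonempty := Set.nonempty_of_ncard_ne_zero (by omega)
  set c := (G.induce A).connectedComponentMk (homOfSubset (G:=G) hBA ⟨x, hxB⟩) with hc
  have hmem : ∀ b : ↥B, (homOfSubset (G:=G) hBA b : ↥A) ∈ c.supp := by
    intro b
    exact (ConnectedComponent.mem_supp_iff _ _).mpr
      (ConnectedComponent.sound ((hconn.preconnected b ⟨x, hxB⟩).map (homOfSubset (G:=G) hBA)))
  have hinj : Function.Injective (fun b : ↥B => (⟨_, hmem b⟩ : c.supp)) := by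
    intro y z heq
    exact Subtype.ext (congrArg (fun w : c.supp => w.1.1) heq)
  have h1 : Nat.card ↥B ≤ Nat.card c.supp := Nat.card_le_card_of_injective _ hinj
  have h2 : Nat.card ↥B = k := by rw [Nat.card_coe_set_eq, hBcard]
  have h3 := hind c
  omega

lemma isGenKIndep_union {A B : Set V}
    (hcross : ∀ a ∈ A, ∀ b ∈ B, ¬ G.Adj a b)
    (hA : IsGenKIndep G k A) (hB : IsGenKIndep G k B) :
    IsGenKIndep G k (A ∪ B) := by
  have key : ∀ (C D : Set V), C ∪ D = A ∪ B → (∀ a ∈ C, ∀ b ∈ D, ¬ G.Adj a b) →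
      IsGenKIndep G k C →
      ∀ (c : (G.induce (A ∪ B)).ConnectedComponent) (x : ↥(A ∪ B)),
        (G.induce (A ∪ B)).connectedComponentMk x = c → x.1 ∈ C →
        Nat.card c.supp ≤ k - 1 := by
    intro C D hCD hcr hC c x hx hxC
    have hCsub : C ⊆ A ∪ B := by rw [← hCD]; exact Set.subset_union_left
    have hcl : ∀ a ∈ C, ∀ b : ↥(A ∪ B), G.Adj a b.1 → b.1 ∈ C := by
      intro a ha b hadj
      have hb : b.1 ∈ C ∪ D := by rw [hCD]; exact b.2
      rcases hb with hb | hb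
      · exact hb
      · exact absurd hadj (hcr a ha b.1 hb)
    set c' := (G.induce C).connectedComponentMk ⟨x.1, hxC⟩ with hc'
    have hmem : ∀ y : c.supp, ∃ hy : y.1.1 ∈ C,
        (⟨y.1.1, hy⟩ : ↥C) ∈ c'.supp := by
      intro ⟨y, hy⟩
      have hr : (G.induce (A ∪ B)).Reachable x y := by
        rw [ConnectedComponent.mem_supp_iff, ← hx] at hy
        exact (ConnectedComponent.eq.mp hy).symm
      obtain ⟨hy', hr'⟩ := reach_closed hcl hr hxC
      exact ⟨hy', (ConnectedComponent.mem_supp_iff _ _).mpr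
        (ConnectedComponent.sound hr'.symm)⟩
    have hinj : Function.Injective
        (fun y : c.supp => (⟨⟨y.1.1, (hmem y).choose⟩, (hmem y).choose_spec⟩ : c'.supp)) := by
      intro y z heq
      have : y.1.1 = z.1.1 := congrArg (fun w : c'.supp => w.1.1) heq
      exact Subtype.ext (Subtype.ext this)
    calc Nat.card c.supp ≤ Nat.card c'.supp := Nat.card_le_card_of_injective _ hinj
      _ ≤ k - 1 := hC c'
  intro c
  obtain ⟨x, hx⟩ := c.exists_rep
  rcases x.2 with hxA | hxB
  · exact key A B rfl hcross hA c x hx hxA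
  · exact key B A (Set.union_comm _ _) (fun b hb a ha hadj => hcross a ha b hb hadj.symm)
      hB c x hx hxB

lemma upper_bound (hk : 2 ≤ k) {i : ℕ} {S : Set V} (hR : InRk G k i S) :
    ∀ A ⊆ S, IsGenKIndep G k A → A.ncard + i ≤ S.ncard := by
  induction hR with
  | base S hcard htree =>
    intro A hAS hA
    have hne : A ≠ S := by
      rintro rfl
      exact not_genKIndep_of_connected_subset hk subset_rfl hcard htree.1 hA
    have : A.ncard < S.ncard := Set.ncard_lt_ncard (hAS.ssubset_of_ne hne) (Set.toFinite S)
    omega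
  | step i S B hS hdisj hcard htree hone ih =>
    intro A hAS hA
    have hA1 : IsGenKIndep G k (A ∩ S) := isGenKIndep_mono Set.inter_subset_left hA
    have hIH := ih (A ∩ S) Set.inter_subset_right hA1
    have hnotB : ¬ B ⊆ A := fun hBA =>
      not_genKIndep_of_connected_subset hk hBA hcard htree.1 hA
    have hAB : (A ∩ B).ncard < B.ncard := by
      apply Set.ncard_lt_ncard _ (Set.toFinite B)
      exact ⟨Set.inter_subset_right, fun h => hnotB (fun b hb => ((h hb).1 : b ∈ A))⟩
    have hsplit : A.ncard = (A ∩ S).ncard + (A ∩ B).ncard := by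
      rw [← Set.ncard_union_eq (hdisj.mono Set.inter_subset_right Set.inter_subset_right)
        (Set.toFinite _) (Set.toFinite _), ← Set.inter_union_distrib_left,
        Set.inter_eq_self_of_subset_left hAS]
    have hScard : (S ∪ B).ncard = S.ncard + B.ncard :=
      Set.ncard_union_eq hdisj (Set.toFinite _) (Set.toFinite _)
    omega

lemma lower_bound (hk : 2 ≤ k) {i : ℕ} {S : Set V} (hR : InRk G k i S) :
    ∃ A ⊆ S, IsGenKIndep G k A ∧ A.ncard + i = S.ncard := by
  induction hR with
  | base S hcard htree =>
    obtain ⟨v, hv⟩ : S.Nonempty := Set.nonempty_of_ncard_ne_zero (by omega)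
    refine ⟨S \ {v}, Set.diff_subset, ?_, ?_⟩
    · exact isGenKIndep_of_ncard_le (by
        rw [Set.ncard_diff_singleton_of_mem hv, hcard])
    · rw [Set.ncard_diff_singleton_of_mem hv, hcard]
      omega
  | step i S B hS hdisj hcard htree hone ih =>
    obtain ⟨A, hAS, hA, hAcard⟩ := ih
    obtain ⟨⟨a, b⟩, ⟨haS, hbB, hadj⟩, huniq⟩ := hone
    refine ⟨A ∪ (B \ {b}), Set.union_subset_union hAS Set.diff_subset, ?_, ?_⟩
    · apply isGenKIndep_union _ hA (isGenKIndep_of_ncard_le (by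
        rw [Set.ncard_diff_singleton_of_mem hbB, hcard]))
      intro x hx y hy hxy
      have : (x, y) = (a, b) := huniq (x, y) ⟨hAS hx, hy.1, hxy⟩
      exact hy.2 (by simpa using congrArg Prod.snd this)
    · have hd : Disjoint A (B \ {b}) :=
        (hdisj.mono hAS Set.diff_subset)
      rw [Set.ncard_union_eq hd (Set.toFinite _) (Set.toFinite _),
        Set.ncard_union_eq hdisj (Set.toFinite _) (Set.toFinite _),
        Set.ncard_diff_singleton_of_mem hbB, hcard]
      omega
end Helpers

/-- If `T` is a tree on `n` vertices with `k ∣ n` and `T ∈ R^k_{n/k}`, then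
`α_k(T) = ((k-1)/k)·n`. -/
theorem alphaK_of_mem_Rk {V : Type*} [Fintype V] (T : SimpleGraph V) (hT : T.IsTree)
    (k : ℕ) (hk : 2 ≤ k) (hdvd : k ∣ Nat.card V)
    (hR : InRk T k (Nat.card V / k) Set.univ) :
    (alphaK T k : ℚ) = ((k : ℚ) - 1) / k * (Nat.card V) := by
  set n := Nat.card V with hn
  set i := n / k with hi
  have hki : k * i = n := Nat.mul_div_cancel' hdvd
  have huniv : (Set.univ : Set V).ncard = n := Set.ncard_univ V
  have hub : ∀ m ∈ {m | ∃ S : Set V, IsGenKIndep T k S ∧ S.ncard = m}, m ≤ n - i := by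
    rintro m ⟨S, hS, rfl⟩
    have := upper_bound hk hR S (Set.subset_univ S) hS
    omega
  have hmem : n - i ∈ {m | ∃ S : Set V, IsGenKIndep T k S ∧ S.ncard = m} := by
    obtain ⟨A, _, hA, hAcard⟩ := lower_bound hk hR
    exact ⟨A, hA, by omega⟩
  have halpha : alphaK T k = n - i :=
    le_antisymm (csSup_le ⟨_, hmem⟩ hub) (le_csSup ⟨n - i, hub⟩ hmem)
  have hiLe : i ≤ n := Nat.div_le_self n k
  rw [halpha, Nat.cast_sub hiLe]
  have hnQ : (n : ℚ) = k * i := by exact_mod_cast hki.symm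
  have hkQ : (k : ℚ) ≠ 0 := by
    have : (0:ℚ) < k := by exact_mod_cast (by omega : 0 < k)
    exact ne_of_gt this
  rw [hnQ]
  field_simp
end

section
/- Let G be a finite simple graph on n vertices with cycle-space dimension ω(G), and let k ≥ 2. Then α_k(G) ≥ ((k−1)/k)·(n − ω(G)). -/
open SimpleGraph

/-- The dimension of the cycle space: `|E| - |V| + c(G)` (as a natural number;
note `|E| + c(G) ≥ |V|` always holds). -/
noncomputable def cycleDim {V : Type*} (G : SimpleGraph V) : ℕ :=
  Nat.card G.edgeSet + Nat.card G.ConnectedComponent - Nat.card V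

/-- `x` lies on a cycle of `G`. -/
def OnCycle {V : Type*} (G : SimpleGraph V) (x : V) : Prop :=
  ∃ (u : V) (w : G.Walk u u), w.IsCycle ∧ x ∈ w.support

section
variable {V : Type*} (G : SimpleGraph V)

/-- reachability inside an induced subgraph, phrased on the ambient type -/
def Rch (A : Set V) (x y : V) : Prop :=
  ∃ (hx : x ∈ A) (hy : y ∈ A), (G.induce A).Reachable ⟨x, hx⟩ ⟨y, hy⟩

variable {G}

lemma Rch.mem_left {A : Set V} {x y : V} (h : Rch G A x y) : x ∈ A := h.1
lemma Rch.mem_right {A : Set V} {x y : V} (h : Rch G A x y) : y ∈ A := h.2.1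

lemma rch_refl {A : Set V} {x : V} (hx : x ∈ A) : Rch G A x x := ⟨hx, hx, Reachable.refl _⟩

lemma Rch.symm {A : Set V} {x y : V} (h : Rch G A x y) : Rch G A y x := by
  obtain ⟨hx, hy, h⟩ := h; exact ⟨hy, hx, h.symm⟩

lemma Rch.reachable {A : Set V} {x y : V} (h : Rch G A x y) (hx : x ∈ A) (hy : y ∈ A) :
    (G.induce A).Reachable ⟨x, hx⟩ ⟨y, hy⟩ := by
  obtain ⟨hx', hy', h⟩ := h; exact h

lemma Rch.trans {A : Set V} {x y z : V} (h : Rch G A x y) (h' : Rch G A y z) : Rch G A x z := by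
  obtain ⟨hx, hy, h⟩ := h
  exact ⟨hx, h'.mem_right, h.trans (h'.reachable hy h'.mem_right)⟩

lemma rch_adj {A : Set V} {x y : V} (hx : x ∈ A) (hy : y ∈ A) (h : G.Adj x y) :
    Rch G A x y := ⟨hx, hy, Adj.reachable (by simpa using h)⟩

lemma walk_rch {A : Set V} {a b : ↥A} (p : (G.induce A).Walk a b) (B : Set V)
    (h : ∀ z ∈ p.support, ↑z ∈ B) : Rch G B ↑a ↑b := by
  induction p with
  | nil => exact rch_refl (h _ (by simp))
  | cons hadj q ih =>
    refine Rch.trans (rch_adj (h _ (by simp)) ?_ (by simpa using hadj)) (ih ?_)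
    · exact h _ (by simp [SimpleGraph.Walk.support_cons])
    · intro z hz; exact h _ (by simp [SimpleGraph.Walk.support_cons, hz])

lemma rch_mono {A B : Set V} (hAB : A ⊆ B) {x y : V} (h : Rch G A x y) : Rch G B x y := by
  obtain ⟨hx, hy, h⟩ := h
  obtain ⟨p⟩ := h
  exact walk_rch p B (fun z _ => hAB z.2)

lemma reachable_rch {A : Set V} {a b : ↥A} (h : (G.induce A).Reachable a b) :
    Rch G A ↑a ↑b := by
  obtain ⟨p⟩ := h; exact walk_rch p A (fun z _ => z.2)


section
variable {V : Type*} {G : SimpleGraph V}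

example : True := trivial

/-- From reachability to `x ≠ v`, extract a neighbor `u` of `v` still connected to `x`
after deleting `v`. -/
lemma exists_nbr {A : Set V} {v x : V} (hvx : x ≠ v) (h : Rch G A v x) :
    ∃ u, G.Adj v u ∧ u ∈ A ∧ u ≠ v ∧ Rch G (A \ {v}) u x := by
  obtain ⟨hv, hx, hr⟩ := h
  obtain ⟨w⟩ := hr
  haveI : DecidableEq ↥A := Classical.decEq _
  have hp := w.toPath.2
  set p := (w.toPath : (G.induce A).Walk ⟨v, hv⟩ ⟨x, hx⟩) with hpdef
  clear_value p
  cases p with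
  | nil => exact absurd rfl hvx
  | cons hadj q =>
    rename_i u'
    rw [SimpleGraph.Walk.cons_isPath_iff] at hp
    have hsupp : ∀ z ∈ q.support, (z : V) ∈ A \ {v} := by
      intro z hz
      refine ⟨z.2, ?_⟩
      simp only [Set.mem_singleton_iff]
      intro hzv
      exact hp.2 (by rwa [show z = ⟨v, hv⟩ from Subtype.ext hzv] at hz)
    have hr' := walk_rch q (A \ {v}) hsupp
    refine ⟨↑u', by simpa using hadj, u'.2, ?_, hr'⟩
    intro huv
    have he : u' = ⟨v, hv⟩ := Subtype.ext huv
    exact hp.2 (by rw [← he]; exact SimpleGraph.Walk.start_mem_support q)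

/-- the set of vertices reachable from z within A is the image of the supp of its component -/
lemma rch_set_eq_supp {A : Set V} {z : V} (hz : z ∈ A) :
    {x | Rch G A z x} = Subtype.val '' ((G.induce A).connectedComponentMk ⟨z, hz⟩).supp := by
  ext x
  simp only [Set.mem_setOf_eq, Set.mem_image]
  constructor
  · rintro ⟨hz', hx, hr⟩
    exact ⟨⟨x, hx⟩, by rw [ConnectedComponent.mem_supp_iff, ConnectedComponent.eq]; exact hr.symm, rfl⟩
  · rintro ⟨⟨x', hx'⟩, hmem, rfl⟩
    rw [ConnectedComponent.mem_supp_iff, ConnectedComponent.eq] at hmem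
    exact ⟨hz, hx', hmem.symm⟩

lemma card_supp_eq_ncard {A : Set V} {z : V} (hz : z ∈ A) :
    Nat.card ((G.induce A).connectedComponentMk ⟨z, hz⟩).supp = {x | Rch G A z x}.ncard := by
  rw [rch_set_eq_supp hz, Set.ncard_image_of_injective _ Subtype.val_injective,
    Nat.card_coe_set_eq]

end
end

section
variable {V : Type*} {G : SimpleGraph V}

/-- inclusion homomorphism between induced subgraphs -/
def inclHom (G : SimpleGraph V) {A B : Set V} (h : A ⊆ B) : G.induce A →g G.induce B where
  toFun := Set.inclusion h
  map_rel' := by intro a b hab; simpa using hab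

lemma inclHom_injective {A B : Set V} (h : A ⊆ B) :
    Function.Injective (inclHom G h) := Set.inclusion_injective h

variable [Fintype V]

lemma edge_count {W : Set V} {v : V} (hv : v ∈ W) :
    Nat.card (G.induce (W \ {v} : Set V)).edgeSet
      + {y | y ∈ W ∧ y ≠ v ∧ G.Adj v y}.ncard ≤ Nat.card (G.induce W).edgeSet := by
  classical
  set ND := {y | y ∈ W ∧ y ≠ v ∧ G.Adj v y} with hND
  have hsub : (W \ {v} : Set V) ⊆ W := Set.diff_subset
  set f : (G.induce (W \ {v} : Set V)).edgeSet ⊕ ↥ND → (G.induce W).edgeSet :=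
    Sum.elim (Hom.mapEdgeSet (inclHom G hsub))
      (fun y => ⟨s(⟨v, hv⟩, ⟨(y : V), y.2.1⟩), by
        rw [mem_edgeSet]; simpa using y.2.2.2⟩) with hf
  have hinj : Function.Injective f := by
    have hvnotin : ∀ (e : (G.induce (W \ {v} : Set V)).edgeSet),
        (⟨v, hv⟩ : ↥W) ∉ ((Hom.mapEdgeSet (inclHom G hsub) e : (G.induce W).edgeSet) : Sym2 ↥W) := by
      rintro ⟨e, he⟩ hmem
      simp only [Hom.mapEdgeSet, Sym2.mem_map] at hmem
      obtain ⟨a, _, ha⟩ := hmem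
      have : (a : V) = v := congrArg Subtype.val ha
      exact a.2.2 this
    rintro (e₁ | y₁) (e₂ | y₂) hEq
    · exact congrArg Sum.inl (Hom.mapEdgeSet.injective _ (inclHom_injective hsub) hEq)
    · exfalso
      apply hvnotin e₁
      rw [show (Hom.mapEdgeSet (inclHom G hsub) e₁ : (G.induce W).edgeSet) = _ from hEq]
      exact Sym2.mem_mk_left _ _
    · exfalso
      apply hvnotin e₂
      rw [show (Hom.mapEdgeSet (inclHom G hsub) e₂ : (G.induce W).edgeSet) = _ from hEq.symm]
      exact Sym2.mem_mk_left _ _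
    · simp only [f, Sum.elim_inr, Subtype.mk.injEq, Sym2.congr_right] at hEq
      exact congrArg Sum.inr (Subtype.ext hEq)
  have := Nat.card_le_card_of_injective f hinj
  rwa [Nat.card_sum, Nat.card_coe_set_eq] at this

end

section
variable {V : Type*} {G : SimpleGraph V}

lemma rch_mk_eq {A : Set V} {x y : ↥A} (h : Rch G A ↑x ↑y) :
    (G.induce A).connectedComponentMk x = (G.induce A).connectedComponentMk y :=
  ConnectedComponent.eq.2 (h.reachable x.2 y.2)

lemma mk_eq_rch {A : Set V} {x y : ↥A}
    (h : (G.induce A).connectedComponentMk x = (G.induce A).connectedComponentMk y) :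
    Rch G A ↑x ↑y :=
  reachable_rch (ConnectedComponent.eq.1 h)

/-- if `x` is not reachable to `v`, reachability survives deleting `v` -/
lemma rch_avoid {W : Set V} {v x y : V} (h : Rch G W x y) (hne : ¬ Rch G W x v) :
    Rch G (W \ {v}) x y := by
  classical
  obtain ⟨hx, hy, hr⟩ := h
  obtain ⟨p⟩ := hr
  refine walk_rch p (W \ {v}) ?_
  intro z hz
  refine ⟨z.2, ?_⟩
  simp only [Set.mem_singleton_iff]
  intro hzv
  exact hne (by
    have : Rch G W x ↑z := walk_rch (p.takeUntil z hz) W (fun w _ => w.2)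
    rwa [hzv] at this)

variable [Fintype V]

lemma comp_count_gen {W : Set V} {v : V} (hv : v ∈ W) (B : Set V)
    (hB : B ⊆ {y | y ∈ W ∧ y ≠ v ∧ G.Adj v y})
    (hsel : ∀ x ∈ W \ {v}, Rch G W v x →
      ∃ u ∈ {y | y ∈ W ∧ y ≠ v ∧ G.Adj v y} \ B, Rch G (W \ {v}) u x) :
    Nat.card (G.induce (W \ {v} : Set V)).ConnectedComponent + 1 + B.ncard
      ≤ Nat.card (G.induce W).ConnectedComponent
        + {y | y ∈ W ∧ y ≠ v ∧ G.Adj v y}.ncard := by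
  classical
  set ND := {y | y ∈ W ∧ y ≠ v ∧ G.Adj v y} with hND
  set W' : Set V := W \ {v} with hW'
  have hsub : W' ⊆ W := Set.diff_subset
  have hrep : ∀ c' : (G.induce W').ConnectedComponent,
      ∃ x : ↥W', (G.induce W').connectedComponentMk x = c' := fun c' => c'.exists_rep
  choose rep hrep using hrep
  set PP : (G.induce W').ConnectedComponent → (G.induce W).ConnectedComponent :=
    fun c' => (G.induce W).connectedComponentMk ⟨↑(rep c'), hsub (rep c').2⟩ with hPP
  set mkv : (G.induce W).ConnectedComponent := (G.induce W).connectedComponentMk ⟨v, hv⟩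
    with hmkv
  have hchoice : ∀ c', PP c' = mkv →
      ∃ u, u ∈ ND \ B ∧ ∃ hu : u ∈ W', (G.induce W').connectedComponentMk ⟨u, hu⟩ = c' := by
    intro c' h
    have hxr : Rch G W v ↑(rep c') := (mk_eq_rch h).symm
    obtain ⟨u, huNDB, hru⟩ := hsel ↑(rep c') (rep c').2 hxr
    exact ⟨u, huNDB, hru.mem_left,
      (rch_mk_eq (x := ⟨u, hru.mem_left⟩) (y := rep c') hru).trans (hrep c')⟩
  choose sel hsel1 hsel2 hsel3 using hchoice
  set f : ((G.induce W').ConnectedComponent ⊕ (PUnit.{1} ⊕ ↥B)) →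
      ((G.induce W).ConnectedComponent ⊕ ↥ND) :=
    Sum.elim
      (fun c' => if h : PP c' = mkv
        then Sum.inr ⟨sel c' h, (hsel1 c' h).1⟩
        else Sum.inl (PP c'))
      (Sum.elim (fun _ => Sum.inl mkv)
        (fun b => Sum.inr ⟨↑b, hB b.2⟩)) with hf
  have hPPinj : ∀ c₁' c₂', PP c₁' = PP c₂' → PP c₁' ≠ mkv → c₁' = c₂' := by
    intro c₁ c₂ heq hne
    have h1 : Rch G W ↑(rep c₁) ↑(rep c₂) := mk_eq_rch heq
    have h2 : ¬ Rch G W ↑(rep c₁) v := fun hc => hne (rch_mk_eq (y := ⟨v, hv⟩) hc)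
    have h3 : Rch G W' ↑(rep c₁) ↑(rep c₂) := rch_avoid h1 h2
    exact (hrep c₁).symm.trans ((rch_mk_eq h3).trans (hrep c₂))
  have hinj : Function.Injective f := by
    rintro (c₁ | (u₁ | b₁)) (c₂ | (u₂ | b₂)) hEq <;>
      simp only [hf, Sum.elim_inl, Sum.elim_inr] at hEq
    · -- c vs c
      refine congrArg Sum.inl ?_
      by_cases h1 : PP c₁ = mkv <;> by_cases h2 : PP c₂ = mkv
      · rw [dif_pos h1, dif_pos h2] at hEq
        have hval : sel c₁ h1 = sel c₂ h2 := congrArg Subtype.val (Sum.inr.inj hEq)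
        calc c₁ = (G.induce W').connectedComponentMk ⟨sel c₁ h1, hsel2 c₁ h1⟩ :=
              (hsel3 c₁ h1).symm
          _ = (G.induce W').connectedComponentMk ⟨sel c₂ h2, hsel2 c₂ h2⟩ := by
              exact congrArg _ (Subtype.ext hval)
          _ = c₂ := hsel3 c₂ h2
      · rw [dif_pos h1, dif_neg h2] at hEq; exact absurd hEq (by simp)
      · rw [dif_neg h1, dif_pos h2] at hEq; exact absurd hEq (by simp)
      · rw [dif_neg h1, dif_neg h2] at hEq
        exact hPPinj c₁ c₂ (Sum.inl.inj hEq) h1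
    · -- c vs punit
      exfalso
      by_cases h1 : PP c₁ = mkv
      · rw [dif_pos h1] at hEq; exact absurd hEq (by simp)
      · rw [dif_neg h1] at hEq; exact h1 (Sum.inl.inj hEq)
    · -- c vs b
      exfalso
      by_cases h1 : PP c₁ = mkv
      · rw [dif_pos h1] at hEq
        have hval : sel c₁ h1 = ↑b₂ := congrArg Subtype.val (Sum.inr.inj hEq)
        exact (hsel1 c₁ h1).2 (hval ▸ b₂.2)
      · rw [dif_neg h1] at hEq; exact absurd hEq (by simp)
    · -- punit vs c
      exfalso
      by_cases h2 : PP c₂ = mkv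
      · rw [dif_pos h2] at hEq; exact absurd hEq (by simp)
      · rw [dif_neg h2] at hEq; exact h2 (Sum.inl.inj hEq).symm
    · exact congrArg _ (congrArg _ (Subsingleton.elim u₁ u₂))
    · exact absurd hEq (by simp)
    · -- b vs c
      exfalso
      by_cases h2 : PP c₂ = mkv
      · rw [dif_pos h2] at hEq
        have hval : sel c₂ h2 = ↑b₁ := (congrArg Subtype.val (Sum.inr.inj hEq)).symm
        exact (hsel1 c₂ h2).2 (hval ▸ b₁.2)
      · rw [dif_neg h2] at hEq; exact absurd hEq (by simp)
    · exact absurd hEq (by simp)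
    · have h' : (⟨(b₁ : V), hB b₁.2⟩ : ↥ND) = ⟨(b₂ : V), hB b₂.2⟩ := Sum.inr.inj hEq
      rw [Subtype.mk.injEq] at h'
      exact congrArg _ (congrArg _ (Subtype.ext h'))
  have hcard := Nat.card_le_card_of_injective f hinj
  rw [Nat.card_sum, Nat.card_sum, Nat.card_sum, Nat.card_eq_fintype_card (α := PUnit.{1}),
    Fintype.card_punit, Nat.card_coe_set_eq, Nat.card_coe_set_eq] at hcard
  omega

end

section
variable {V : Type*} {G : SimpleGraph V}

lemma cycle_nbrs {W : Set V} {a : ↥W} {c : (G.induce W).Walk a a} (hc : c.IsCycle) :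
    ∃ b₁ b₂ : V, b₁ ≠ b₂ ∧ (b₁ ∈ {y | y ∈ W ∧ y ≠ ↑a ∧ G.Adj ↑a y})
      ∧ (b₂ ∈ {y | y ∈ W ∧ y ≠ ↑a ∧ G.Adj ↑a y})
      ∧ Rch G (W \ {(a : V)}) b₁ b₂ := by
  have h3 := hc.three_le_length
  cases c with
  | nil => simp at h3
  | cons h q =>
    rename_i b₁
    have hnd : q.support.Nodup := by
      have := hc.support_nodup
      rwa [Walk.support_cons, List.tail_cons] at this
    cases hqe : q.reverse with
    | nil =>
      exfalso
      have : q.length = 0 := by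
        have := congrArg Walk.length hqe
        rwa [Walk.length_reverse] at this
      rw [Walk.length_cons, this] at h3; omega
    | cons h₂ r =>
      rename_i b₂
      have hrev : q.support.reverse = (a : ↥W) :: r.support := by
        rw [← Walk.support_reverse, hqe, Walk.support_cons]
      -- a ∉ r.support
      have hanr : (a : ↥W) ∉ r.support := by
        have : q.support.reverse.Nodup := List.nodup_reverse.2 hnd
        rw [hrev, List.nodup_cons] at this
        exact this.1
      -- lengths
      have hql : q.length = r.length + 1 := by
        have := congrArg Walk.length hqe
        rwa [Walk.length_reverse, Walk.length_cons] at this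
      have hrlen : 1 ≤ r.length := by
        rw [Walk.length_cons, hql] at h3; omega
      -- b₁ ≠ b₂ as subtypes
      have hb12 : b₁ ≠ b₂ := by
        intro hbb
        have hrne : r.support ≠ [] := Walk.support_ne_nil r
        have hhead : q.support.head? = some b₁ := by
          rw [Walk.support_eq_cons q]; rfl
        have h1 : q.support.reverse.getLast? = some b₁ := by
          rw [List.getLast?_eq_head?_reverse, List.reverse_reverse]; exact hhead
        rw [hrev] at h1
        have hrs : r.support = b₂ :: r.support.tail := Walk.support_eq_cons r
        have htne : r.support.tail ≠ [] := by
          have hlen : r.support.length = r.length + 1 := Walk.length_support r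
          intro hnil
          rw [hrs, hnil] at hlen
          simp only [List.length_cons, List.length_nil] at hlen
          omega
        have hnd_r : r.support.Nodup := by
          have h2 : ((a : ↥W) :: r.support).Nodup := by
            rw [← hrev]; exact List.nodup_reverse.2 hnd
          exact (List.nodup_cons.1 h2).2
        have h5 : r.support.tail.getLast? = some b₁ := by
          rw [show (a : ↥W) :: r.support = [(a : ↥W)] ++ r.support from rfl,
            List.getLast?_append, hrs,
            show b₂ :: r.support.tail = [b₂] ++ r.support.tail from rfl,
            List.getLast?_append, List.getLast?_eq_getLast htne, Option.some_or,
            Option.some_or] at h1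
          rw [List.getLast?_eq_getLast htne]
          exact h1
        have hb1mem : b₁ ∈ r.support.tail := List.mem_of_getLast? h5
        rw [hrs, List.nodup_cons] at hnd_r
        exact hnd_r.1 (hbb ▸ hb1mem)
      refine ⟨↑b₁, ↑b₂, fun hv => hb12 (Subtype.ext hv), ⟨b₁.2, ?_, by simpa using h⟩,
        ⟨b₂.2, ?_, by simpa using h₂⟩, ?_⟩
      · intro hba
        exact (G.induce W).irrefl (show (G.induce W).Adj a a from (Subtype.ext hba : b₁ = a) ▸ h)
      · intro hba
        exact (G.induce W).irrefl (show (G.induce W).Adj a a from (Subtype.ext hba : b₂ = a) ▸ h₂)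
      · refine (walk_rch r (W \ {(a : V)}) ?_).symm
        intro z hz
        refine ⟨z.2, ?_⟩
        simp only [Set.mem_singleton_iff]
        intro hza
        exact hanr (by rwa [show z = a from Subtype.ext hza] at hz)
end

section
variable {V : Type*} [Fintype V] {G : SimpleGraph V}

lemma comp_count {W : Set V} {v : V} (hv : v ∈ W) :
    Nat.card (G.induce (W \ {v} : Set V)).ConnectedComponent + 1
      ≤ Nat.card (G.induce W).ConnectedComponent + {y | y ∈ W ∧ y ≠ v ∧ G.Adj v y}.ncard := by
  have h := comp_count_gen (G := G) hv ∅ (Set.empty_subset _) ?hsel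
  · simpa using h
  case hsel =>
    intro x hx hr
    obtain ⟨u, hadj, huW, huv, hru⟩ := exists_nbr (fun hxv => hx.2 (by simp [hxv])) hr
    exact ⟨u, ⟨⟨huW, huv, hadj⟩, by simp⟩, hru⟩

lemma card_le_edge_add_comp : ∀ (n : ℕ) (W : Set V), W.ncard = n →
    W.ncard ≤ Nat.card (G.induce W).edgeSet + Nat.card (G.induce W).ConnectedComponent := by
  intro n
  induction n using Nat.strong_induction_on with
  | _ n ih =>
    intro W hW
    rcases Set.eq_empty_or_nonempty W with rfl | ⟨v, hv⟩
    · simp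
    · have hW' : (W \ {v}).ncard = n - 1 := by
        rw [Set.ncard_diff_singleton_of_mem hv, hW]
      have hpos : 1 ≤ n := by
        rw [← hW]
        exact (Set.ncard_pos (Set.toFinite W)).2 ⟨v, hv⟩
      have IH := ih (n - 1) (by omega) (W \ {v}) hW'
      have hE := edge_count (G := G) hv
      have hC := comp_count (G := G) hv
      omega

lemma cycle_drop {W : Set V} {a : ↥W} {c : (G.induce W).Walk a a} (hc : c.IsCycle) :
    Nat.card (G.induce (W \ {(a : V)} : Set V)).edgeSet
      + Nat.card (G.induce (W \ {(a : V)} : Set V)).ConnectedComponent + 2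
    ≤ Nat.card (G.induce W).edgeSet + Nat.card (G.induce W).ConnectedComponent := by
  obtain ⟨b₁, b₂, hne, hb₁, hb₂, hrch⟩ := cycle_nbrs hc
  have hE := edge_count (G := G) a.2
  have hC := comp_count_gen (G := G) a.2 {b₂} (Set.singleton_subset_iff.2 hb₂) ?hsel
  · rw [Set.ncard_singleton] at hC
    omega
  case hsel =>
    intro x hx hr
    obtain ⟨u, hadj, huW, huv, hru⟩ := exists_nbr (fun hxv => hx.2 (by simp [hxv])) hr
    by_cases hub : u = b₂
    · exact ⟨b₁, ⟨hb₁, by simp [hne]⟩, hrch.trans (hub ▸ hru)⟩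
    · exact ⟨u, ⟨⟨huW, huv, hadj⟩, by simp [hub]⟩, hru⟩

end

section
variable {V : Type*} {G : SimpleGraph V}

lemma walk_stay {S A : Set V} (hcl : ∀ x ∈ A, ∀ y ∈ S, G.Adj x y → y ∈ A)
    {a b : ↥S} (p : (G.induce S).Walk a b) (ha : (a : V) ∈ A) :
    ∀ z ∈ p.support, (z : V) ∈ A := by
  induction p with
  | nil =>
    intro z hz
    simp only [Walk.support_nil, List.mem_singleton] at hz
    exact hz ▸ ha
  | cons h q ih =>
    intro z hz
    rename_i u y w
    have hy : (y : V) ∈ A := hcl ↑u ha ↑y y.2 (by simpa using h)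
    simp only [Walk.support_cons, List.mem_cons] at hz
    rcases hz with rfl | hz
    · exact ha
    · exact ih hy z hz

lemma acyclic_mono {A B : Set V} (hAB : A ⊆ B) (hB : (G.induce B).IsAcyclic) :
    (G.induce A).IsAcyclic := by
  intro v c hc
  exact hB _ (hc.map (f := inclHom G hAB) (inclHom_injective hAB))

variable [Fintype V]

lemma comp_bound_of_closed {k : ℕ} {S A : Set V} (hSA : A ⊆ S)
    (hcl : ∀ x ∈ A, ∀ y ∈ S, G.Adj x y → y ∈ A)
    (hA : IsGenKIndep G k A) (c : (G.induce S).ConnectedComponent)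
    (x : ↥S) (hx : (G.induce S).connectedComponentMk x = c) (hxA : (x : V) ∈ A) :
    Nat.card c.supp ≤ k - 1 := by
  have hsub : Subtype.val '' c.supp ⊆ {z | Rch G A ↑x z} := by
    rintro _ ⟨z, hz, rfl⟩
    rw [ConnectedComponent.mem_supp_iff, ← hx, ConnectedComponent.eq] at hz
    obtain ⟨p⟩ := hz.symm
    exact walk_rch p A (walk_stay hcl p hxA)
  calc Nat.card c.supp = (Subtype.val '' c.supp).ncard := by
        rw [Set.ncard_image_of_injective _ Subtype.val_injective, Nat.card_coe_set_eq]
    _ ≤ {z | Rch G A ↑x z}.ncard := Set.ncard_le_ncard hsub (Set.toFinite _)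
    _ = Nat.card ((G.induce A).connectedComponentMk ⟨↑x, hxA⟩).supp :=
        (card_supp_eq_ncard hxA).symm
    _ ≤ k - 1 := hA _

lemma IsGenKIndep.union {k : ℕ} {A B : Set V} (hAB : ∀ x ∈ A, ∀ y ∈ B, ¬ G.Adj x y)
    (hA : IsGenKIndep G k A) (hB : IsGenKIndep G k B) : IsGenKIndep G k (A ∪ B) := by
  intro c
  obtain ⟨x, hx⟩ := c.exists_rep
  rcases x.2 with hxA | hxB
  · refine comp_bound_of_closed Set.subset_union_left ?_ hA c x hx hxA
    intro p hp y hy hadj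
    by_contra hyA
    rcases hy with hyA' | hyB
    · exact hyA hyA'
    · exact hAB p hp y hyB hadj
  · refine comp_bound_of_closed Set.subset_union_right ?_ hB c x hx hxB
    intro p hp y hy hadj
    by_contra hyB
    rcases hy with hyA | hyB'
    · exact hAB y hyA p hp hadj.symm
    · exact hyB hyB'

lemma ncard_le_alphaK {k : ℕ} {S : Set V} (h : IsGenKIndep G k S) :
    S.ncard ≤ alphaK G k := by
  refine le_csSup ⟨Nat.card V, ?_⟩ ⟨S, h, rfl⟩
  rintro m ⟨T, _, rfl⟩
  calc T.ncard ≤ (Set.univ : Set V).ncard :=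
        Set.ncard_le_ncard (Set.subset_univ T) Set.finite_univ
    _ = Nat.card V := Set.ncard_univ V

end

section
variable {V : Type*} [Fintype V] {G : SimpleGraph V}

lemma comp_small {k : ℕ} {U : Set V} {v : V}
    (hnb : ∀ u, u ∈ U → u ≠ v → G.Adj v u → {x | Rch G (U \ {v}) u x}.ncard ≤ k - 1) :
    IsGenKIndep G k ({x | Rch G U v x} \ {v}) := by
  intro c
  obtain ⟨x, hx0⟩ := c.exists_rep
  have hx : (G.induce ({x | Rch G U v x} \ {v} : Set V)).connectedComponentMk x = c := hx0
  have hxD : (x : V) ∈ {x | Rch G U v x} \ {v} := x.2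
  have hxv : (x : V) ≠ v := fun h => hxD.2 (by simp [h])
  obtain ⟨u, hadj, huU, huv, hru⟩ := exists_nbr hxv hxD.1
  have hDU : ({x | Rch G U v x} \ {v} : Set V) ⊆ U \ {v} := by
    rintro t ⟨ht1, ht2⟩
    exact ⟨ht1.mem_right, ht2⟩
  have hsub : Subtype.val '' c.supp ⊆ {z | Rch G (U \ {v}) u z} := by
    rintro _ ⟨z, hz, rfl⟩
    rw [ConnectedComponent.mem_supp_iff, ← hx, ConnectedComponent.eq] at hz
    have h1 : Rch G ({x | Rch G U v x} \ {v}) ↑x ↑z := reachable_rch hz.symm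
    exact hru.trans (rch_mono hDU h1)
  calc Nat.card c.supp = (Subtype.val '' c.supp).ncard := by
        rw [Set.ncard_image_of_injective _ Subtype.val_injective, Nat.card_coe_set_eq]
    _ ≤ {z | Rch G (U \ {v}) u z}.ncard := Set.ncard_le_ncard hsub (Set.toFinite _)
    _ ≤ k - 1 := hnb u huU huv hadj

/-- two distinct neighbors of `v` cannot be connected avoiding `v` in an acyclic graph -/
lemma nbrs_not_connected {W : Set V} (hac : (G.induce W).IsAcyclic) {v u w : V}
    (hv : v ∈ W) (hadj1 : G.Adj v u) (hadj2 : G.Adj v w) (huw : u ≠ w)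
    (h : Rch G (W \ {v}) u w) : False := by
  classical
  obtain ⟨hu', hw', hr⟩ := h
  obtain ⟨q⟩ := hr
  have hu : u ∈ W := hu'.1
  have hw : w ∈ W := hw'.1
  set p := q.toPath with hpdef
  set P2 : (G.induce W).Walk ⟨u, hu⟩ ⟨w, hw⟩ :=
    (p.val).map (inclHom G Set.diff_subset) with hP2def
  have hP2 : P2.IsPath := Walk.map_isPath_of_injective (inclHom_injective _) p.2
  have ha1 : (G.induce W).Adj ⟨u, hu⟩ ⟨v, hv⟩ := by simpa using hadj1.symm
  have ha2 : (G.induce W).Adj ⟨v, hv⟩ ⟨w, hw⟩ := by simpa using hadj2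
  set P1 : (G.induce W).Walk ⟨u, hu⟩ ⟨w, hw⟩ :=
    Walk.cons ha1 (Walk.cons ha2 Walk.nil) with hP1def
  have hP1 : P1.IsPath := by
    rw [hP1def, Walk.cons_isPath_iff, Walk.cons_isPath_iff]
    refine ⟨⟨Walk.IsPath.nil, ?_⟩, ?_⟩
    · simp only [Walk.support_nil, List.mem_singleton]
      exact fun hc => hadj2.ne (congrArg Subtype.val hc)
    · simp only [Walk.support_cons, Walk.support_nil, List.mem_cons, List.mem_singleton,
        List.not_mem_nil, or_false]
      rintro (hc | hc)
      · exact hadj1.ne' (congrArg Subtype.val hc)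
      · exact huw (congrArg Subtype.val hc)
  have hpq : P1 = P2 := congrArg Subtype.val (hac.path_unique ⟨P1, hP1⟩ ⟨P2, hP2⟩)
  have hvP1 : (⟨v, hv⟩ : ↥W) ∈ P1.support := by
    rw [hP1def, Walk.support_cons, Walk.support_cons]
    exact List.mem_cons_of_mem _ List.mem_cons_self
  rw [hpq] at hvP1
  have hvP1 : (⟨v, hv⟩ : ↥W) ∈ (p.val.support.map (inclHom G Set.diff_subset)) := by
    rw [← Walk.support_map]; exact hvP1
  obtain ⟨z', _, hz'⟩ := List.mem_map.1 hvP1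
  exact z'.2.2 (congrArg Subtype.val hz')

lemma exists_block {k : ℕ} (hk : 2 ≤ k) {W : Set V} (hac : (G.induce W).IsAcyclic)
    {c₀ : (G.induce W).ConnectedComponent} (hc₀ : k ≤ Nat.card c₀.supp) :
    ∃ (D : Set V) (b : V), b ∈ D ∧ D ⊆ W ∧ k ≤ D.ncard ∧ IsGenKIndep G k (D \ {b}) ∧
      (∀ x ∈ D \ {b}, ∀ y ∈ W \ D, ¬ G.Adj x y) := by
  classical
  by_cases hbig : ∃ p : V × V, (p.1 ∈ W ∧ p.2 ∈ W ∧ G.Adj p.1 p.2) ∧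
      k ≤ {x | Rch G (W \ {p.1}) p.2 x}.ncard
  · -- case (i): take a minimal big side
    set M := {m | ∃ p : V × V, ((p.1 ∈ W ∧ p.2 ∈ W ∧ G.Adj p.1 p.2) ∧
      k ≤ {x | Rch G (W \ {p.1}) p.2 x}.ncard) ∧ {x | Rch G (W \ {p.1}) p.2 x}.ncard = m}
      with hM
    have hMne : M.Nonempty := by
      obtain ⟨p, hp⟩ := hbig
      exact ⟨_, ⟨p, hp, rfl⟩⟩
    obtain ⟨⟨a, b⟩, ⟨⟨haW, hbW, hadj⟩, hkD⟩, hDcard⟩ := Nat.sInf_mem hMne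
    have hmin : ∀ m ∈ M, sInf M ≤ m := fun m hm => Nat.sInf_le hm
    set U : Set V := W \ {a} with hU
    have hbU : b ∈ U := ⟨hbW, by simp [hadj.ne']⟩
    set D : Set V := {x | Rch G U b x} with hD
    have hDW : D ⊆ W := fun x hx => hx.mem_right.1
    have hbD : b ∈ D := rch_refl hbU
    have hDsub : ∀ z ∈ D, z ∈ U := fun z hz => hz.mem_right
    refine ⟨D, b, hbD, hDW, hDcard ▸ hkD, ?_, ?_⟩
    · -- components of D \ {b} are small
      refine comp_small ?_
      intro u huU hub hadjbu
      by_contra hcon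
      have hkDD : k ≤ {x | Rch G (U \ {b}) u x}.ncard := by omega
      -- W\{b}-reachability from u implies (U\{b})-reachability
      have hclaim : {x | Rch G (W \ {b}) u x} ⊆ {x | Rch G (U \ {b}) u x} := by
        intro z hz
        obtain ⟨hu', hz', hr⟩ := hz
        obtain ⟨q⟩ := hr
        have haWb : a ∈ W \ {b} := ⟨haW, by simp [hadj.ne]⟩
        by_cases hamem : (⟨a, haWb⟩ : ↥(W \ {b} : Set V)) ∈ q.support
        · exfalso
          have hra : Rch G (W \ {b}) u a :=
            walk_rch (q.takeUntil _ hamem) (W \ {b}) (fun t _ => t.2)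
          exact nbrs_not_connected hac hbW hadjbu hadj.symm
            (fun hc => huU.2 (by simp [hc])) hra
        · refine walk_rch q (U \ {b}) ?_
          intro t ht
          refine ⟨⟨t.2.1, ?_⟩, t.2.2⟩
          simp only [Set.mem_singleton_iff]
          intro hta
          exact hamem (by rwa [show t = ⟨a, haWb⟩ from Subtype.ext hta] at ht)
      -- the new side is strictly inside D
      have hDDsub : {x | Rch G (U \ {b}) u x} ⊆ D \ {b} := by
        intro z hz
        have h1 : Rch G U u z := rch_mono Set.diff_subset hz
        have h2 : Rch G U b u := rch_adj hbU huU hadjbu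
        exact ⟨h2.trans h1, fun hzb => (hz.mem_right.2 : z ∉ ({b} : Set V)) hzb⟩
      have hsub2 : {x | Rch G (W \ {b}) u x} ⊆ D \ {b} := fun z hz => hDDsub (hclaim hz)
      have hmem : {x | Rch G (W \ {b}) u x}.ncard ∈ M := by
        refine ⟨(b, u), ⟨⟨hbW, huU.1, hadjbu⟩, ?_⟩, rfl⟩
        calc k ≤ {x | Rch G (U \ {b}) u x}.ncard := hkDD
          _ ≤ {x | Rch G (W \ {b}) u x}.ncard := by
            refine Set.ncard_le_ncard ?_ (Set.toFinite _)
            intro z hz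
            refine rch_mono ?_ hz
            intro t ht
            exact ⟨ht.1.1, ht.2⟩
      have h3 := hmin _ hmem
      have h4 : {x | Rch G (W \ {b}) u x}.ncard ≤ (D \ {b}).ncard :=
        Set.ncard_le_ncard hsub2 (Set.toFinite _)
      have h5 : (D \ {b}).ncard = D.ncard - 1 := by
        rw [Set.ncard_diff_singleton_of_mem hbD]
      have h6 : 1 ≤ D.ncard := by
        have := hDcard ▸ hkD
        omega
      rw [← hDcard] at h3
      omega
    · -- no edges from D \ {b} to W \ D
      rintro x ⟨hxD, hxb⟩ y ⟨hyW, hyD⟩ hadjxy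
      by_cases hya : y = a
      · subst hya
        exact nbrs_not_connected hac haW hadj hadjxy.symm
          (fun hc => hxb (Set.mem_singleton_iff.2 hc.symm)) hxD
      · exact hyD (hxD.trans (rch_adj (hDsub x hxD) ⟨hyW, by simp [hya]⟩ hadjxy))
  · -- case (ii): a whole component works
    obtain ⟨x₀, hx₀0⟩ := c₀.exists_rep
    have hx₀ : (G.induce W).connectedComponentMk x₀ = c₀ := hx₀0
    set r : V := ↑x₀ with hr
    set D : Set V := {x | Rch G W r x} with hD
    have hrW : r ∈ W := x₀.2
    have hDW : D ⊆ W := fun x hx => hx.mem_right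
    have hrD : r ∈ D := rch_refl hrW
    have hkD : k ≤ D.ncard := by
      have hcard := card_supp_eq_ncard (G := G) x₀.2
      rw [show (⟨↑x₀, x₀.2⟩ : ↥W) = x₀ from rfl, hx₀] at hcard
      rw [← hcard]
      exact hc₀
    refine ⟨D, r, hrD, hDW, hkD, ?_, ?_⟩
    · refine comp_small ?_
      intro u huW hur hadjru
      by_contra hcon
      refine hbig ⟨(r, u), ⟨hrW, huW, hadjru⟩, ?_⟩
      show k ≤ {x | Rch G (W \ {r}) u x}.ncard
      omega
    · rintro x ⟨hxD, hxr⟩ y ⟨hyW, hyD⟩ hadjxy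
      exact hyD (hxD.trans (rch_adj (hxD.mem_right) hyW hadjxy))

end

section
variable {V : Type*} [Fintype V] {G : SimpleGraph V}

lemma forest_bound {k : ℕ} (hk : 2 ≤ k) : ∀ (n : ℕ) (W : Set V), W.ncard = n →
    (G.induce W).IsAcyclic →
    ∃ S : Set V, S ⊆ W ∧ IsGenKIndep G k S ∧ (k - 1) * W.ncard ≤ k * S.ncard := by
  intro n
  induction n using Nat.strong_induction_on with
  | _ n ih =>
  intro W hW hac
  by_cases hsmall : IsGenKIndep G k W
  · exact ⟨W, subset_rfl, hsmall, Nat.mul_le_mul_right _ (by omega)⟩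
  · have hex : ∃ c : (G.induce W).ConnectedComponent, k ≤ Nat.card c.supp := by
      by_contra hcon
      push_neg at hcon
      exact hsmall (fun c => by have := hcon c; omega)
    obtain ⟨c₀, hc₀⟩ := hex
    obtain ⟨D, b, hbD, hDW, hkD, hindep, hcross⟩ := exists_block hk hac hc₀
    have hdn : D.ncard ≤ W.ncard := Set.ncard_le_ncard hDW (Set.toFinite _)
    have hWD : (W \ D).ncard = W.ncard - D.ncard := Set.ncard_diff hDW
    have hlt : (W \ D).ncard < n := by omega
    obtain ⟨S', hS'sub, hS'ind, hS'card⟩ := ih _ hlt (W \ D) rfl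
      (acyclic_mono Set.diff_subset hac)
    set S : Set V := (D \ {b}) ∪ S' with hS
    have hcross' : ∀ x ∈ D \ {b}, ∀ y ∈ S', ¬ G.Adj x y :=
      fun x hx y hy => hcross x hx y (hS'sub hy)
    have hSind : IsGenKIndep G k S := IsGenKIndep.union hcross' hindep hS'ind
    have hSsub : S ⊆ W := by
      rintro x (hx | hx)
      · exact hDW hx.1
      · exact (hS'sub hx).1
    have hdisj : Disjoint (D \ {b} : Set V) S' := by
      rw [Set.disjoint_left]
      intro x hx hx'
      exact (hS'sub hx').2 hx.1
    have hSn : S.ncard = (D.ncard - 1) + S'.ncard := by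
      rw [hS, Set.ncard_union_eq hdisj (Set.toFinite _) (Set.toFinite _),
        Set.ncard_diff_singleton_of_mem hbD]
    refine ⟨S, hSsub, hSind, ?_⟩
    obtain ⟨a, rfl⟩ : ∃ a, k = a + 1 := ⟨k - 1, by omega⟩
    obtain ⟨d', hd'⟩ : ∃ d', D.ncard = d' + 1 := ⟨D.ncard - 1, by omega⟩
    have hsimp : a + 1 - 1 = a := by omega
    rw [hsimp] at hS'card ⊢
    have had' : a ≤ d' := by omega
    have hn : W.ncard = (W \ D).ncard + D.ncard := by omega
    have hSn' : S.ncard = d' + S'.ncard := by omega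
    rw [hSn', hn, hd']
    calc a * ((W \ D).ncard + (d' + 1))
        = a * (W \ D).ncard + (a * d' + a) := by ring
      _ ≤ (a + 1) * S'.ncard + (a * d' + a) := by
          exact Nat.add_le_add_right hS'card _
      _ ≤ (a + 1) * S'.ncard + (a * d' + d') := by
          exact Nat.add_le_add_left (Nat.add_le_add_left had' _) _
      _ = (a + 1) * (d' + S'.ncard) := by ring

lemma main_bound {k : ℕ} (hk : 2 ≤ k) : ∀ (n : ℕ) (W : Set V), W.ncard = n →
    ∃ S : Set V, S ⊆ W ∧ IsGenKIndep G k S ∧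
      (k - 1) * (2 * W.ncard) ≤ k * S.ncard
        + (k - 1) * (Nat.card (G.induce W).edgeSet
            + Nat.card (G.induce W).ConnectedComponent) := by
  intro n
  induction n using Nat.strong_induction_on with
  | _ n ih =>
  intro W hW
  by_cases hac : (G.induce W).IsAcyclic
  · obtain ⟨S, hs, hi, hb⟩ := forest_bound hk W.ncard W rfl hac
    refine ⟨S, hs, hi, ?_⟩
    have hL1 := card_le_edge_add_comp (G := G) W.ncard W rfl
    have h2 : (k - 1) * W.ncard
        ≤ (k - 1) * (Nat.card (G.induce W).edgeSet
            + Nat.card (G.induce W).ConnectedComponent) :=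
      Nat.mul_le_mul_left _ hL1
    calc (k - 1) * (2 * W.ncard) = (k - 1) * W.ncard + (k - 1) * W.ncard := by ring
      _ ≤ k * S.ncard + (k - 1) * (Nat.card (G.induce W).edgeSet
            + Nat.card (G.induce W).ConnectedComponent) := Nat.add_le_add hb h2
  · simp only [IsAcyclic, not_forall, not_not] at hac
    obtain ⟨a, c, hc⟩ := hac
    have haW : (a : V) ∈ W := a.2
    have hW' : (W \ {(a : V)}).ncard = n - 1 := by
      rw [Set.ncard_diff_singleton_of_mem haW, hW]
    have hpos : 1 ≤ n := by
      rw [← hW]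
      exact (Set.ncard_pos (Set.toFinite W)).2 ⟨↑a, haW⟩
    obtain ⟨S, hs, hi, hb⟩ := ih (n - 1) (by omega) _ hW'
    refine ⟨S, hs.trans Set.diff_subset, hi, ?_⟩
    have hdrop := cycle_drop (G := G) hc
    have e1 : 2 * W.ncard = 2 * (W \ {(a : V)}).ncard + 2 := by omega
    set E' := Nat.card (G.induce (W \ {(a : V)} : Set V)).edgeSet
    set C' := Nat.card (G.induce (W \ {(a : V)} : Set V)).ConnectedComponent
    set E := Nat.card (G.induce W).edgeSet
    set C := Nat.card (G.induce W).ConnectedComponent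
    calc (k - 1) * (2 * W.ncard)
        = (k - 1) * (2 * (W \ {(a : V)}).ncard) + (k - 1) * 2 := by rw [e1]; ring
      _ ≤ (k * S.ncard + (k - 1) * (E' + C')) + (k - 1) * 2 := Nat.add_le_add_right hb _
      _ = k * S.ncard + (k - 1) * (E' + C' + 2) := by ring
      _ ≤ k * S.ncard + (k - 1) * (E + C) :=
          Nat.add_le_add_left (Nat.mul_le_mul_left _ (by omega)) _

end

/-- For every graph `G` on `n` vertices, `α_k(G) ≥ ((k-1)/k)·(n - ω(G))`. -/
theorem alphaK_lower_bound {V : Type*} [Fintype V] (G : SimpleGraph V) (k : ℕ)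
    (hk : 2 ≤ k) :
    ((k : ℚ) - 1) / k * ((Nat.card V : ℚ) - cycleDim G) ≤ alphaK G k := by
  obtain ⟨S, hs, hi, hb⟩ := main_bound (G := G) hk (Set.univ : Set V).ncard Set.univ rfl
  have hiso := induceUnivIso G
  have hE : Nat.card (G.induce (Set.univ : Set V)).edgeSet = Nat.card G.edgeSet :=
    Nat.card_congr hiso.mapEdgeSet
  have hC : Nat.card (G.induce (Set.univ : Set V)).ConnectedComponent
      = Nat.card G.ConnectedComponent :=
    Nat.card_congr hiso.connectedComponentEquiv
  have hL1 := card_le_edge_add_comp (G := G) (Set.univ : Set V).ncard Set.univ rfl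
  rw [hE, hC, Set.ncard_univ] at hb hL1
  have halpha : S.ncard ≤ alphaK G k := ncard_le_alphaK hi
  set E := Nat.card G.edgeSet with hEdef
  set C := Nat.card G.ConnectedComponent with hCdef
  set n := Nat.card V with hndef
  have hb' : (k - 1) * (2 * n) ≤ k * alphaK G k + (k - 1) * (E + C) := by
    calc (k - 1) * (2 * n) ≤ k * S.ncard + (k - 1) * (E + C) := hb
      _ ≤ k * alphaK G k + (k - 1) * (E + C) :=
        Nat.add_le_add_right (Nat.mul_le_mul_left _ halpha) _
  -- cast to ℚ
  have hk1 : 1 ≤ k := by omega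
  have hQ : ((k : ℚ) - 1) * (2 * n) ≤ k * alphaK G k + ((k : ℚ) - 1) * (E + C) := by
    have := (Nat.cast_le (α := ℚ)).2 hb'
    push_cast [Nat.cast_sub hk1] at this
    convert this using 2 <;> push_cast <;> ring
  have hcd : ((cycleDim G : ℕ) : ℚ) = (E : ℚ) + C - n := by
    rw [cycleDim, ← hEdef, ← hCdef, ← hndef, Nat.cast_sub hL1]
    push_cast
    ring
  rw [hcd]
  rw [div_mul_eq_mul_div, div_le_iff₀ (by positivity : (0 : ℚ) < k)]
  nlinarith [hQ]
end

section
/- For k ≥ 2 and n ≥ 3, the cycle C_n satisfies α_k(C_n) = ((k−1)/k)·(n−1) if and only if n ≡ 1 (mod k). -/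
open SimpleGraph
open Fin.NatCast

lemma arc_reachable {n : ℕ} [NeZero n] (hn : 2 ≤ n) {S : Set (Fin n)} {a : Fin n} {k : ℕ}
    (hS : ∀ i : ℕ, i < k → a + (i : Fin n) ∈ S) (ha : a ∈ S) :
    ∀ (i : ℕ) (hi : i < k),
      ((cycleGraph n).induce S).Reachable ⟨a, ha⟩ ⟨a + (i : Fin n), hS i hi⟩ := by
  intro i
  induction i with
  | zero =>
    intro h0
    have he : (⟨a + ((0:ℕ) : Fin n), hS 0 h0⟩ : S) = ⟨a, ha⟩ := Subtype.ext (by simp)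
    rw [he]
  | succ i ih =>
    intro hi
    have h1 : i < k := by omega
    refine (ih h1).trans (Adj.reachable ?_)
    have : (cycleGraph n).Adj (a + (i : Fin n)) (a + ((i+1:ℕ) : Fin n)) := by
      apply cycleGraph_adj'.mpr
      right
      have h2 : (a + ((i+1:ℕ) : Fin n)) - (a + (i : Fin n)) = 1 := by push_cast; abel
      rw [h2, Fin.val_one']
      exact Nat.mod_eq_of_lt (by omega)
    exact this

lemma genk_card_le {n k q : ℕ} (hk : 2 ≤ k) (hn : 3 ≤ n) (hq : 1 ≤ q) (hnq : n = q * k + 1)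
    {S : Set (Fin n)} (hS : IsGenKIndep (cycleGraph n) k S) : S.ncard ≤ q * (k - 1) := by
  classical
  haveI : NeZero n := ⟨by omega⟩
  have hmul : q * (k - 1) + q = q * k := by
    have h1 : k - 1 + 1 = k := by omega
    calc q * (k-1) + q = q * ((k-1)+1) := by ring
    _ = q * k := by rw [h1]
  have hqkn : q * k + 1 = n := hnq.symm
  by_contra hlt
  push_neg at hlt
  have htot : S.ncard + Sᶜ.ncard = n := by
    have := Set.ncard_add_ncard_compl S
    rwa [Nat.card_eq_fintype_card, Fintype.card_fin] at this
  have hcompl : Sᶜ.ncard ≤ q := by omega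
  -- pigeonhole: there is an arc of length k inside S
  have harc : ∃ a : Fin n, ∀ i : ℕ, i < k → a + (i : Fin n) ∈ S := by
    by_contra h
    push_neg at h
    have hsub : (Finset.univ : Finset (Fin n)) ⊆
        Sᶜ.toFinset.biUnion (fun t => (Finset.range k).image (fun i : ℕ => t - (i : Fin n))) := by
      intro a _
      obtain ⟨i, hik, hmem⟩ := h a
      simp only [Finset.mem_biUnion, Set.mem_toFinset, Finset.mem_image, Finset.mem_range]
      exact ⟨a + (i : Fin n), hmem, i, hik, by abel⟩
    have hcard := Finset.card_le_card hsub
    rw [Finset.card_univ, Fintype.card_fin] at hcard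
    have h2 : (Sᶜ.toFinset.biUnion
        (fun t => (Finset.range k).image (fun i : ℕ => t - (i : Fin n)))).card
        ≤ Sᶜ.toFinset.card * k := by
      refine le_trans (Finset.card_biUnion_le) ?_
      refine le_trans (Finset.sum_le_card_nsmul _ _ k ?_) (le_of_eq (by simp [smul_eq_mul]))
      intro t _
      exact le_trans Finset.card_image_le (by simp)
    have h3 : Sᶜ.toFinset.card = Sᶜ.ncard := (Set.ncard_eq_toFinset_card' _).symm
    rw [h3] at h2
    have h4 : Sᶜ.ncard * k ≤ q * k := Nat.mul_le_mul_right k hcompl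
    omega
  obtain ⟨a, ha⟩ := harc
  have ha0 : a ∈ S := by have := ha 0 (by omega); simpa using this
  set c := ((cycleGraph n).induce S).connectedComponentMk ⟨a, ha0⟩ with hc
  have hkn : k < n := by
    have : 1 * k ≤ q * k := Nat.mul_le_mul_right k hq
    omega
  have hinj : ∃ f : Fin k → c.supp, Function.Injective f := by
    refine ⟨fun i => ⟨⟨a + (i.val : Fin n), ha i.val i.isLt⟩, ?_⟩, ?_⟩
    · rw [ConnectedComponent.mem_supp_iff, hc, ConnectedComponent.eq]
      exact (arc_reachable (by omega) ha ha0 i.val i.isLt).symm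
    · intro i j hij
      simp only [Subtype.mk_eq_mk] at hij
      have h5 := add_left_cancel hij
      have hi : ((i.val : Fin n)).val = i.val := Fin.val_cast_of_lt (lt_trans i.isLt hkn)
      have hj : ((j.val : Fin n)).val = j.val := Fin.val_cast_of_lt (lt_trans j.isLt hkn)
      apply Fin.ext
      rw [← hi, ← hj, h5]
  obtain ⟨f, hf⟩ := hinj
  have hcle := Nat.card_le_card_of_injective f hf
  simp only [Nat.card_eq_fintype_card, Fintype.card_fin] at hcle
  have hle := hS c
  rw [Nat.card_eq_fintype_card] at hle
  omega

lemma genk_lower {n k q : ℕ} (hk : 2 ≤ k) (hn : 3 ≤ n) (hq : 1 ≤ q) (hnq : n = q * k + 1) :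
    ∃ S : Set (Fin n), IsGenKIndep (cycleGraph n) k S ∧ S.ncard = q * (k - 1) := by
  classical
  haveI : NeZero n := ⟨by omega⟩
  set S₀ : Set (Fin n) := {v | ¬ k ∣ v.val} with hS₀
  have hk0 : 0 < k := by omega
  have hmul : q * (k - 1) + q = q * k := by
    have h1 : k - 1 + 1 = k := by omega
    calc q * (k-1) + q = q * ((k-1)+1) := by ring
    _ = q * k := by rw [h1]
  refine ⟨S₀, ?_, ?_⟩
  · -- every component has ≤ k-1 vertices
    intro c
    have hstep : ∀ u w : ↥S₀, ((cycleGraph n).induce S₀).Adj u w →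
        (u : Fin n).val / k = (w : Fin n).val / k := by
      have main : ∀ x y : Fin n, ¬ k ∣ x.val → ¬ k ∣ y.val → (y - x).val = 1 →
          x.val / k = y.val / k := by
        intro x y hx hy hxy
        have hy' : y = 1 + x := by
          apply sub_eq_iff_eq_add.mp
          apply Fin.ext
          rw [hxy, Fin.val_one']
          exact (Nat.mod_eq_of_lt (by omega)).symm
        have hvy : y.val = (x.val + 1) % n := by
          rw [hy', Fin.add_def, Fin.val_one']
          rw [Nat.mod_eq_of_lt (show (1:ℕ) < n by omega), Nat.add_comm]
        by_cases hlt : x.val + 1 < n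
        · rw [Nat.mod_eq_of_lt hlt] at hvy
          rw [hvy, Nat.succ_div, if_neg (by rw [← hvy]; exact hy), Nat.add_zero]
        · -- x.val = n - 1 = q * k, divisible: contradiction
          exfalso
          apply hx
          have hxval : x.val = q * k := by have := x.isLt; omega
          rw [hxval]
          exact dvd_mul_left k q
      intro u w hadj
      have hadj' : (cycleGraph n).Adj (u : Fin n) (w : Fin n) := hadj
      rcases cycleGraph_adj'.mp hadj' with h | h
      · exact (main _ _ w.prop u.prop h).symm
      · exact main _ _ u.prop w.prop h
    obtain ⟨v, hv⟩ := c.exists_rep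
    have hreach : ∀ u : ↥S₀, ((cycleGraph n).induce S₀).Reachable u v →
        (u : Fin n).val / k = (v : Fin n).val / k := by
      intro u hr
      obtain ⟨p⟩ := hr
      clear hv
      induction p with
      | nil => rfl
      | cons h p ih => exact (hstep _ _ h).trans ih
    have hsupp : ∀ u : ↥S₀, u ∈ c.supp → (u : Fin n).val / k = (v : Fin n).val / k := by
      intro u hu
      apply hreach
      rw [← ConnectedComponent.eq]
      rw [ConnectedComponent.mem_supp_iff] at hu
      exact hu.trans hv.symm
    have hinj : ∃ g : c.supp → Fin (k - 1), Function.Injective g := by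
      refine ⟨fun u => ⟨((u : ↥S₀) : Fin n).val % k - 1, ?_⟩, ?_⟩
      · have h1 : ((u : ↥S₀) : Fin n).val % k < k := Nat.mod_lt _ hk0
        have h2 : ((u : ↥S₀) : Fin n).val % k ≠ 0 :=
          fun h => (u : ↥S₀).prop (Nat.dvd_of_mod_eq_zero h)
        omega
      · intro u₁ u₂ h12
        have e1 := hsupp u₁ u₁.prop
        have e2 := hsupp u₂ u₂.prop
        have m1 : ((u₁ : ↥S₀) : Fin n).val % k ≠ 0 :=
          fun h => (u₁ : ↥S₀).prop (Nat.dvd_of_mod_eq_zero h)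
        have m2 : ((u₂ : ↥S₀) : Fin n).val % k ≠ 0 :=
          fun h => (u₂ : ↥S₀).prop (Nat.dvd_of_mod_eq_zero h)
        have hmod : ((u₁ : ↥S₀) : Fin n).val % k - 1 = ((u₂ : ↥S₀) : Fin n).val % k - 1 :=
          congrArg Fin.val h12
        have d1 := Nat.div_add_mod ((u₁ : ↥S₀) : Fin n).val k
        have d2 := Nat.div_add_mod ((u₂ : ↥S₀) : Fin n).val k
        rw [e1] at d1
        rw [e2] at d2
        have : ((u₁ : ↥S₀) : Fin n).val = ((u₂ : ↥S₀) : Fin n).val := by omega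
        exact Subtype.ext (Subtype.ext (Fin.ext this))
    obtain ⟨g, hg⟩ := hinj
    have := Nat.card_le_card_of_injective g hg
    simpa using this
  · -- cardinality
    have h1 : S₀.ncard = (Finset.univ.filter (fun v : Fin n => ¬ k ∣ v.val)).card := by
      rw [Set.ncard_eq_toFinset_card']
      congr 1
      ext v
      simp [hS₀]
    have himg : Finset.univ.filter (fun v : Fin n => k ∣ v.val) =
        (Finset.range (q+1)).image (fun i : ℕ => ((i * k : ℕ) : Fin n)) := by
      ext v
      simp only [Finset.mem_filter, Finset.mem_univ, true_and, Finset.mem_image,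
        Finset.mem_range]
      constructor
      · rintro ⟨m, hm⟩
        have hvlt := v.isLt
        have hmq : m < q + 1 := by
          by_contra hcon
          push_neg at hcon
          have h2 : k * (q+1) ≤ k * m := Nat.mul_le_mul_left k hcon
          have h3 : k * (q+1) = k * q + k := by ring
          have h4 : q * k = k * q := Nat.mul_comm q k
          omega
        have hcomm : k * m = m * k := Nat.mul_comm k m
        refine ⟨m, hmq, ?_⟩
        apply Fin.ext
        rw [Fin.val_cast_of_lt (by omega : m * k < n)]
        omega
      · rintro ⟨i, hi, rfl⟩
        have hin : i * k < n := by
          have : i * k ≤ q * k := Nat.mul_le_mul_right k (by omega)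
          omega
        rw [Fin.val_cast_of_lt hin]
        exact dvd_mul_left k i
    have hcard2 : (Finset.univ.filter (fun v : Fin n => k ∣ v.val)).card = q + 1 := by
      rw [himg, Finset.card_image_of_injOn, Finset.card_range]
      intro i hi j hj hij
      simp only [Finset.coe_range, Set.mem_Iio] at hi hj
      have hin : i * k < n := by
        have : i * k ≤ q * k := Nat.mul_le_mul_right k (by omega)
        omega
      have hjn : j * k < n := by
        have : j * k ≤ q * k := Nat.mul_le_mul_right k (by omega)
        omega
      change ((i * k : ℕ) : Fin n) = ((j * k : ℕ) : Fin n) at hij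
      have : ((i * k : ℕ) : Fin n).val = ((j * k : ℕ) : Fin n).val := by rw [hij]
      rw [Fin.val_cast_of_lt hin, Fin.val_cast_of_lt hjn] at this
      exact Nat.eq_of_mul_eq_mul_right hk0 this
    have htot := Finset.card_filter_add_card_filter_not
      (s := (Finset.univ : Finset (Fin n))) (p := fun v : Fin n => k ∣ v.val)
    rw [Finset.card_univ, Fintype.card_fin] at htot
    omega

/-- For `k ≥ 2` and `n ≥ 3`, the cycle `C_n` satisfies
`α_k(C_n) = ((k-1)/k)·(n-1)` if and only if `n ≡ 1 (mod k)`. -/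
theorem alphaK_cycleGraph_eq_iff (k n : ℕ) (hk : 2 ≤ k) (hn : 3 ≤ n) :
    (alphaK (cycleGraph n) k : ℚ) = ((k : ℚ) - 1) / k * ((n : ℚ) - 1) ↔ n % k = 1 := by
  have hkQ : (k : ℚ) ≠ 0 := by positivity
  constructor
  · intro h
    set m := alphaK (cycleGraph n) k with hm
    have hq1 : (m : ℚ) * k = ((k:ℚ) - 1) * ((n:ℚ) - 1) := by
      rw [h]; field_simp
    have hcast : ((m * k : ℕ) : ℚ) = (((k-1) * (n-1) : ℕ) : ℚ) := by
      rw [Nat.cast_mul, Nat.cast_mul, Nat.cast_sub (by omega : 1 ≤ k),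
        Nat.cast_sub (by omega : 1 ≤ n), Nat.cast_one]
      exact hq1
    have hnat : m * k = (k-1) * (n-1) := Nat.cast_injective hcast
    have hdvd : k ∣ (k-1) * (n-1) := ⟨m, by rw [← hnat]; ring⟩
    have hcop : Nat.Coprime k (k-1) := by
      have h2 : Nat.Coprime ((k-1)+1) (k-1) := by simp
      rwa [Nat.sub_add_cancel (by omega)] at h2
    have hdvd2 : k ∣ n - 1 := hcop.dvd_of_dvd_mul_left hdvd
    obtain ⟨c, hc⟩ := hdvd2
    have hn' : n = k * c + 1 := by rw [← hc]; omega
    rw [hn', Nat.mul_add_mod]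
    exact Nat.mod_eq_of_lt (by omega)
  · intro h
    have hd := Nat.div_add_mod n k
    set q := n / k with hqdef
    have hnq : n = q * k + 1 := by rw [Nat.mul_comm q k]; omega
    have hq : 1 ≤ q := by
      by_contra hcon
      push_neg at hcon
      interval_cases q <;> omega
    obtain ⟨S, hS, hcard⟩ := genk_lower hk hn hq hnq
    have hbdd : ∀ m' ∈ {m' | ∃ T : Set (Fin n), IsGenKIndep (cycleGraph n) k T ∧ T.ncard = m'},
        m' ≤ q * (k - 1) := by
      rintro m' ⟨T, hT, rfl⟩
      exact genk_card_le hk hn hq hnq hT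
    have halpha : alphaK (cycleGraph n) k = q * (k-1) := by
      apply le_antisymm
      · exact csSup_le ⟨_, ⟨S, hS, hcard⟩⟩ hbdd
      · exact le_csSup ⟨q * (k-1), hbdd⟩ ⟨S, hS, hcard⟩
    rw [halpha]
    have hnQ : ((n:ℚ) - 1) = (q : ℚ) * k := by
      rw [hnq]; push_cast; ring
    rw [hnQ]
    rw [Nat.cast_mul, Nat.cast_sub (by omega : 1 ≤ k), Nat.cast_one]
    field_simp
end
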